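/- arXiv:1603.08954 — 9 statements merged into one kernel-verified Lean document; each statement's English description precedes it below -/
import Mathlib

section
/- Let K ⊆ ℝ^m be a pointed, full-dimensional rational polyhedral cone and let L ⊆ ℝ^m be a full-rank lattice. Then there exists a ℤ-basis λ₁, …, λ_m of L such that K ∩ L ⊆ { ν₁λ₁ + ⋯ + ν_mλ_m : ν₁, …, ν_m ∈ ℕ }. -/
open Pointwise
open Matrix


-- shear: add multiples of one basis vector to the others
theorem aux_shear {R M : Type*} [CommRing R] [AddCommGroup M] [Module R M]
    {ι : Type*} [Fintype ι] [DecidableEq ι]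
    (g : Module.Basis ι R M) (N : ι → R) (j₀ : ι) (hN : N j₀ = 0) :
    ∃ h : Module.Basis ι R M, ∀ j, h j = g j + N j • g j₀ := by
  classical
  set T : M →ₗ[R] M := g.constr R (fun j => g j + N j • g j₀) with hT
  set S : M →ₗ[R] M := g.constr R (fun j => g j - N j • g j₀) with hS
  have hTg : ∀ j, T (g j) = g j + N j • g j₀ := fun j => g.constr_basis R _ j
  have hSg : ∀ j, S (g j) = g j - N j • g j₀ := fun j => g.constr_basis R _ j
  have hST : S ∘ₗ T = LinearMap.id := by
    apply g.ext
    intro j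
    simp only [LinearMap.comp_apply, LinearMap.id_apply, hTg]
    rw [map_add, LinearMap.map_smul, hSg, hSg, hN]
    simp
  have hTS : T ∘ₗ S = LinearMap.id := by
    apply g.ext
    intro j
    simp only [LinearMap.comp_apply, LinearMap.id_apply, hSg]
    rw [map_sub, LinearMap.map_smul, hTg, hTg, hN]
    simp
  set e : M ≃ₗ[R] M := LinearEquiv.ofLinear T S hTS hST with he
  refine ⟨g.map e, fun j => ?_⟩
  simp [he, Module.Basis.map_apply, LinearEquiv.ofLinear_apply, hTg]

-- Smith: a nonzero integer vector is an integer multiple of some basis vector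
theorem aux_smith (m : ℕ) (w : Fin m → ℤ) (hw : w ≠ 0) :
    ∃ (g : Module.Basis (Fin m) ℤ (Fin m → ℤ)) (j₀ : Fin m) (k : ℤ), k ≠ 0 ∧ w = k • g j₀ := by
  classical
  obtain ⟨n, snf⟩ :=
    (Submodule.span ℤ ({w} : Set (Fin m → ℤ))).smithNormalForm (Pi.basisFun ℤ (Fin m))
  have hwN : w ∈ Submodule.span ℤ ({w} : Set (Fin m → ℤ)) :=
    Submodule.mem_span_singleton_self w
  -- the span of w has a basis indexed by Fin 1
  have hli : LinearIndependent ℤ (fun _ : Fin 1 => w) :=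
    linearIndependent_unique_iff.mpr hw
  have hrange : Set.range (fun _ : Fin 1 => w) = ({w} : Set (Fin m → ℤ)) :=
    Set.range_const
  have B1 : Module.Basis (Fin 1) ℤ (Submodule.span ℤ ({w} : Set (Fin m → ℤ))) := by
    rw [← hrange]
    exact Module.Basis.span hli
  have hn1 : n = 1 := by
    have e := snf.bN.indexEquiv B1
    simpa using Fintype.card_congr e
  subst hn1
  have hrepr : (⟨w, hwN⟩ : Submodule.span ℤ ({w} : Set (Fin m → ℤ)))
      = (snf.bN.repr ⟨w, hwN⟩ 0) • snf.bN 0 := by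
    conv_lhs => rw [← snf.bN.sum_repr ⟨w, hwN⟩]
    rw [Fin.sum_univ_one]
  have hw1 : w = (snf.bN.repr ⟨w, hwN⟩ 0) • (snf.bN 0 : Fin m → ℤ) := by
    have := congrArg Subtype.val hrepr
    simpa using this
  rw [snf.snf 0, smul_smul] at hw1
  refine ⟨snf.bM, snf.f 0, _, ?_, hw1⟩
  intro h0
  apply hw
  rw [hw1, h0, zero_smul]


-- a strictly positive rational direction can be replaced by an integer one
theorem aux_intpoint (m : ℕ) (t : Finset (Fin m → ℝ)) (y : Fin m → ℝ)
    (hy : ∀ v ∈ t, 0 < ∑ i, y i * v i) :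
    ∃ w : Fin m → ℤ, ∀ v ∈ t, 0 < ∑ i, (w i : ℝ) * v i := by
  classical
  set U : Set (Fin m → ℝ) := ⋂ v ∈ t, (fun z : Fin m → ℝ => ∑ i, z i * v i) ⁻¹' Set.Ioi 0
    with hU
  have hUopen : IsOpen U := by
    apply isOpen_biInter_finset
    intro v _
    apply IsOpen.preimage ?_ isOpen_Ioi
    exact continuous_finset_sum _ fun i _ => (continuous_apply i).mul continuous_const
  have hyU : y ∈ U := by
    simp only [hU, Set.mem_iInter, Set.mem_preimage, Set.mem_Ioi]
    exact fun v hv => hy v hv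
  obtain ⟨δ, hδ, hball⟩ := Metric.isOpen_iff.mp hUopen y hyU
  set w : Fin m → ℤ := fun i => ⌈(2 / δ) * y i⌉ with hwdef
  have hz : (δ / 2) • (fun i => (w i : ℝ)) ∈ Metric.ball y δ := by
    rw [Metric.mem_ball]
    have h1 : ∀ i, dist ((δ / 2) * (w i : ℝ)) (y i) ≤ δ / 2 := by
      intro i
      have h2 : y i = (δ / 2) * ((2 / δ) * y i) := by
        field_simp
      rw [Real.dist_eq, h2, ← mul_sub, abs_mul, abs_of_pos (by positivity : (0:ℝ) < δ / 2)]
      have h3 : |(w i : ℝ) - (2 / δ) * y i| ≤ 1 := by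
        rw [abs_le]
        constructor
        · linarith [Int.le_ceil ((2 / δ) * y i)]
        · linarith [Int.ceil_lt_add_one ((2 / δ) * y i)]
      calc δ / 2 * |(w i : ℝ) - 2 / δ * y i| ≤ δ / 2 * 1 := by
            apply mul_le_mul_of_nonneg_left h3 (by positivity)
        _ = δ / 2 := by ring
    calc dist ((δ / 2) • (fun i => (w i : ℝ))) y ≤ δ / 2 := by
          apply dist_pi_le_iff (by positivity) |>.mpr
          intro i
          exact h1 i
      _ < δ := by linarith
  have hzU := hball hz
  simp only [hU, Set.mem_iInter, Set.mem_preimage, Set.mem_Ioi] at hzU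
  refine ⟨w, fun v hv => ?_⟩
  have := hzU v hv
  have h4 : ∑ i, ((δ / 2) • (fun i => (w i : ℝ))) i * v i = (δ / 2) * ∑ i, (w i : ℝ) * v i := by
    rw [Finset.mul_sum]
    exact Finset.sum_congr rfl fun i _ => by simp; ring
  rw [h4] at this
  nlinarith


theorem aux_sep (m : ℕ) (t : Finset (Fin m → ℝ))
    (h0 : (0 : Fin m → ℝ) ∉ convexHull ℝ (t : Set (Fin m → ℝ))) :
    ∃ y : Fin m → ℝ, ∀ v ∈ t, 0 < ∑ i, y i * v i := by
  have hconv : Convex ℝ (convexHull ℝ (t : Set (Fin m → ℝ))) := convex_convexHull _ _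
  have hclosed : IsClosed (convexHull ℝ (t : Set (Fin m → ℝ))) :=
    (t.finite_toSet.isCompact_convexHull ℝ).isClosed
  obtain ⟨f, u, hfu, hf⟩ := geometric_hahn_banach_point_closed hconv hclosed h0
  rw [map_zero] at hfu
  refine ⟨fun i => f (fun j => if i = j then 1 else 0), fun v hv => ?_⟩
  have hfv : f v = ∑ i, v i * f (fun j => if i = j then 1 else 0) := by
    conv_lhs => rw [pi_eq_sum_univ v]
    rw [map_sum]
    exact Finset.sum_congr rfl fun i _ => by rw [_root_.map_smul, smul_eq_mul]
  have h5 : u < f v := hf v (subset_convexHull ℝ (t : Set (Fin m → ℝ)) hv)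
  have h6 : ∑ i, f (fun j => if i = j then 1 else 0) * v i = f v := by
    rw [hfv]
    exact Finset.sum_congr rfl fun i _ => mul_comm _ _
  rw [h6]
  linarith
theorem aux_unimodular (m : ℕ) (t : Finset (Fin m → ℝ))
    (h0 : (0 : Fin m → ℝ) ∉ convexHull ℝ (t : Set (Fin m → ℝ))) :
    ∃ A A' : Matrix (Fin m) (Fin m) ℤ, A * A' = 1 ∧ A' * A = 1 ∧
      ∀ j, ∀ v ∈ t, 0 ≤ ∑ i, (A j i : ℝ) * v i := by
  classical
  rcases t.eq_empty_or_nonempty with rfl | ht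
  · exact ⟨1, 1, one_mul 1, one_mul 1, fun j v hv => absurd hv (Finset.notMem_empty v)⟩
  obtain ⟨y, hy⟩ := aux_sep m t h0
  obtain ⟨w, hw⟩ := aux_intpoint m t y hy
  have hwne : w ≠ 0 := by
    rintro rfl
    obtain ⟨v, hv⟩ := ht
    simpa using hw v hv
  obtain ⟨g0, j₀, k, hk, hwk⟩ := aux_smith m w hwne
  -- fix the sign so that the distinguished basis vector pairs positively
  set u : Fin m → ℤˣ := fun j => if j = j₀ then (if 0 < k then 1 else -1) else 1 with hu
  set g1 := g0.unitsSMul u with hg1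
  have hg1j : ∀ j, (g1 j : Fin m → ℤ) = (u j : ℤ) • g0 j := fun j => g0.unitsSMul_apply j
  have hS : ∀ v ∈ t, 0 < ∑ i, ((g1 j₀) i : ℝ) * v i := by
    intro v hv
    have hwv := hw v hv
    have hsum : ∑ i, ((w i : ℝ)) * v i = (k : ℝ) * ∑ i, ((g0 j₀) i : ℝ) * v i := by
      rw [Finset.mul_sum]
      refine Finset.sum_congr rfl fun i _ => ?_
      rw [hwk]
      simp only [Pi.smul_apply, smul_eq_mul]
      push_cast
      ring
    rw [hsum] at hwv
    have huj : (u j₀ : ℤ) = if 0 < k then 1 else -1 := by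
      by_cases hpos : 0 < k <;> simp [hu, hpos]
    have hexp : ∑ i, ((g1 j₀) i : ℝ) * v i
        = ((u j₀ : ℤ) : ℝ) * ∑ i, ((g0 j₀) i : ℝ) * v i := by
      rw [Finset.mul_sum]
      refine Finset.sum_congr rfl fun i _ => ?_
      rw [hg1j j₀]
      simp only [Pi.smul_apply, smul_eq_mul]
      push_cast
      ring
    rw [hexp, huj]
    rcases lt_trichotomy k 0 with hneg | hzero | hpos
    · rw [if_neg (by omega)]
      push_cast
      nlinarith [(by exact_mod_cast hneg : (k:ℝ) < 0)]
    · exact absurd hzero hk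
    · rw [if_pos hpos]
      push_cast
      nlinarith [(by exact_mod_cast hpos : (0:ℝ) < (k:ℝ))]
  -- choose the shear coefficients
  set N : Fin m → ℤ := fun j => if j = j₀ then 0 else
    max 0 ⌈t.sup' ht (fun v => (-(∑ i, ((g1 j) i : ℝ) * v i)) / (∑ i, ((g1 j₀) i : ℝ) * v i))⌉
    with hN
  obtain ⟨h, hh⟩ := aux_shear g1 N j₀ (by rw [hN]; simp)
  have hrows : ∀ j, ∀ v ∈ t, 0 ≤ ∑ i, ((h j) i : ℝ) * v i := by
    intro j v hv
    have hexp : ∑ i, ((h j) i : ℝ) * v i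
        = (∑ i, ((g1 j) i : ℝ) * v i) + (N j : ℝ) * ∑ i, ((g1 j₀) i : ℝ) * v i := by
      rw [Finset.mul_sum, ← Finset.sum_add_distrib]
      refine Finset.sum_congr rfl fun i _ => ?_
      rw [hh j]
      show ((g1 j i + N j * g1 j₀ i : ℤ) : ℝ) * v i = _
      push_cast
      ring
    rw [hexp]
    by_cases hj : j = j₀
    · subst hj
      rw [hN]
      simp only [if_pos rfl]
      have := hS v hv
      push_cast
      linarith
    · set S := ∑ i, ((g1 j₀) i : ℝ) * v i with hSdef
      set R := ∑ i, ((g1 j) i : ℝ) * v i with hRdef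
      have hSpos : 0 < S := hS v hv
      have hNval : N j = max 0 ⌈t.sup' ht (fun v => (-(∑ i, ((g1 j) i : ℝ) * v i)) / (∑ i, ((g1 j₀) i : ℝ) * v i))⌉ := by
        rw [hN]; simp only [if_neg hj]
      have hge : ((N j : ℤ) : ℝ) ≥ (-R) / S := by
        rw [hNval]
        have h1 : (-R) / S ≤ t.sup' ht (fun v => (-(∑ i, ((g1 j) i : ℝ) * v i)) / (∑ i, ((g1 j₀) i : ℝ) * v i)) :=
          Finset.le_sup' (fun v => (-(∑ i, ((g1 j) i : ℝ) * v i)) / (∑ i, ((g1 j₀) i : ℝ) * v i)) hv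
        have h2 : (t.sup' ht (fun v => (-(∑ i, ((g1 j) i : ℝ) * v i)) / (∑ i, ((g1 j₀) i : ℝ) * v i)) : ℝ)
            ≤ (⌈t.sup' ht (fun v => (-(∑ i, ((g1 j) i : ℝ) * v i)) / (∑ i, ((g1 j₀) i : ℝ) * v i))⌉ : ℤ) :=
          Int.le_ceil _
        have h3 : ((⌈t.sup' ht (fun v => (-(∑ i, ((g1 j) i : ℝ) * v i)) / (∑ i, ((g1 j₀) i : ℝ) * v i))⌉ : ℤ) : ℝ)
            ≤ ((max 0 ⌈t.sup' ht (fun v => (-(∑ i, ((g1 j) i : ℝ) * v i)) / (∑ i, ((g1 j₀) i : ℝ) * v i))⌉ : ℤ) : ℝ) := by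
          exact_mod_cast le_max_right _ _
        linarith
      have : (-R) / S * S ≤ (N j : ℝ) * S :=
        mul_le_mul_of_nonneg_right hge (le_of_lt hSpos)
      rw [div_mul_cancel₀ _ (ne_of_gt hSpos)] at this
      linarith
  -- convert the basis h into a unimodular matrix pair
  set std := Pi.basisFun ℤ (Fin m) with hstd
  refine ⟨(std.toMatrix h)ᵀ, (h.toMatrix std)ᵀ, ?_, ?_, ?_⟩
  · rw [← Matrix.transpose_mul, Module.Basis.toMatrix_mul_toMatrix_flip, Matrix.transpose_one]
  · rw [← Matrix.transpose_mul, Module.Basis.toMatrix_mul_toMatrix_flip, Matrix.transpose_one]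
  · intro j v hv
    have : ∀ i, ((std.toMatrix h)ᵀ j i : ℤ) = h j i := by
      intro i
      rw [Matrix.transpose_apply, Module.Basis.toMatrix_apply, hstd, Pi.basisFun_repr]
    calc (0:ℝ) ≤ ∑ i, ((h j) i : ℝ) * v i := hrows j v hv
      _ = ∑ i, (((std.toMatrix h)ᵀ j i : ℤ) : ℝ) * v i := by
          exact Finset.sum_congr rfl fun i _ => by rw [this i]



-- main combination lemma
theorem aux_main (m : ℕ) (K : Set (Fin m → ℝ)) (s : Finset (Fin m → ℝ))
    (hKeq : K = {x | ∃ c : (Fin m → ℝ) → ℝ, (∀ v ∈ s, 0 ≤ c v) ∧ x = ∑ v ∈ s, c v • v})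
    (bL : Module.Basis (Fin m) ℝ (Fin m → ℝ)) (L : AddSubgroup (Fin m → ℝ))
    (hL : L = AddSubgroup.closure (Set.range bL))
    (A A' : Matrix (Fin m) (Fin m) ℤ) (h1 : A * A' = 1) (h2 : A' * A = 1)
    (hpos : ∀ j, ∀ v ∈ s, 0 ≤ ∑ i, (A j i : ℝ) * bL.equivFun v i) :
    ∃ lam : Fin m → (Fin m → ℝ),
      (∀ i, lam i ∈ L) ∧
      (∀ x ∈ L, ∃! ν : Fin m → ℤ, x = ∑ i, ν i • lam i) ∧
      (∀ x ∈ K ∩ (L : Set (Fin m → ℝ)), ∃ ν : Fin m → ℕ, x = ∑ i, (ν i : ℝ) • lam i) := by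
  classical
  -- membership in L
  have hmemL : ∀ x, x ∈ L ↔ ∃ n : Fin m → ℤ, x = ∑ i, (n i : ℝ) • bL i := by
    intro x
    rw [hL, ← Submodule.span_int_eq_addSubgroupClosure, Submodule.mem_toAddSubgroup,
      Submodule.mem_span_range_iff_exists_fun]
    constructor
    · rintro ⟨c, rfl⟩
      exact ⟨c, by simp [← Int.cast_smul_eq_zsmul ℝ]⟩
    · rintro ⟨n, rfl⟩
      exact ⟨n, by simp [← Int.cast_smul_eq_zsmul ℝ]⟩
  set lam : Fin m → (Fin m → ℝ) := fun j => bL.equivFun.symm (fun i => (A' i j : ℝ)) with hlam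
  have hlam' : ∀ j, lam j = ∑ i, (A' i j : ℝ) • bL i := by
    intro j; show bL.equivFun.symm _ = _; rw [Module.Basis.equivFun_symm_apply]
  -- key sum computation
  have hsum : ∀ ν : Fin m → ℤ, (∑ j, (ν j : ℝ) • lam j)
      = bL.equivFun.symm (fun i => ∑ j, (A' i j : ℝ) * (ν j : ℝ)) := by
    intro ν
    have : ∀ j, (ν j : ℝ) • lam j = bL.equivFun.symm (fun i => (A' i j : ℝ) * (ν j : ℝ)) := by
      intro j
      rw [hlam]
      rw [← LinearEquiv.map_smul]
      congr 1
      ext i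
      simp [mul_comm]
    simp_rw [this]
    rw [← map_sum]
    congr 1
    ext i
    simp [Finset.sum_apply]
  set RA : Matrix (Fin m) (Fin m) ℝ := A.map (Int.cast : ℤ → ℝ) with hRA
  set RA' : Matrix (Fin m) (Fin m) ℝ := A'.map (Int.cast : ℤ → ℝ) with hRA'
  have castRH : (Int.castRingHom ℝ : ℤ →+* ℝ) = (Int.cast : ℤ → ℝ) := rfl
  have hR1 : RA * RA' = 1 := by
    rw [hRA, hRA', ← castRH, ← Matrix.map_mul, h1, Matrix.map_one] <;> simp
  have hR2 : RA' * RA = 1 := by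
    rw [hRA, hRA', ← castRH, ← Matrix.map_mul, h2, Matrix.map_one] <;> simp
  -- characterization of integer representations
  have hchar : ∀ (n ν : Fin m → ℤ), (∑ i, (n i : ℝ) • bL i) = ∑ j, (ν j : ℝ) • lam j ↔
      (fun i => (n i : ℝ)) = RA' *ᵥ (fun j => (ν j : ℝ)) := by
    intro n ν
    rw [hsum, ← Module.Basis.equivFun_symm_apply]
    rw [← (bL.equivFun.symm.injective.eq_iff (a := fun i => (n i : ℝ)))]
    constructor
    · intro h; rw [h]; funext i
      simp [Matrix.mulVec, dotProduct, hRA', mul_comm]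
    · intro h; rw [h]; funext i
      simp [Matrix.mulVec, dotProduct, hRA', mul_comm]
  have hrec : ∀ (n ν : Fin m → ℤ), ((fun i => (n i : ℝ)) = RA' *ᵥ (fun j => (ν j : ℝ))) →
      (fun j => (ν j : ℝ)) = RA *ᵥ (fun i => (n i : ℝ)) := by
    intro n ν h
    rw [h, Matrix.mulVec_mulVec, hR1, Matrix.one_mulVec]
  refine ⟨lam, ?_, ?_, ?_⟩
  · intro j
    rw [hmemL]
    exact ⟨fun i => A' i j, hlam' j⟩
  · intro x hx
    obtain ⟨n, rfl⟩ := (hmemL x).mp hx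
    refine ⟨fun j => (A *ᵥ n) j, ?_, ?_⟩
    · have : (∑ i, (n i : ℝ) • bL i) = ∑ j, ((A *ᵥ n) j : ℝ) • lam j := by
        rw [hchar]
        funext i
        have : (A' *ᵥ (A *ᵥ n)) i = n i := by
          rw [Matrix.mulVec_mulVec, h2, Matrix.one_mulVec]
        rw [← this]
        simp [Matrix.mulVec, dotProduct, hRA']
      rw [this]
      simp [Int.cast_smul_eq_zsmul]
    · intro ν hν
      simp only [← Int.cast_smul_eq_zsmul ℝ] at hν
      have hν' := hrec n ν ((hchar n ν).mp hν)
      have h0' : (fun j => (((A *ᵥ n) j : ℤ) : ℝ)) = RA *ᵥ (fun i => (n i : ℝ)) := by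
        funext j
        simp [Matrix.mulVec, dotProduct, hRA]
      funext j
      have := congrFun (hν'.trans h0'.symm) j
      exact_mod_cast this
  · rintro x ⟨hxK, hxL⟩
    obtain ⟨n, rfl⟩ := (hmemL x).mp hxL
    set x := ∑ i, (n i : ℝ) • bL i with hxdef
    rw [hKeq] at hxK
    obtain ⟨c, hc0, hcx⟩ := hxK
    -- the coordinates of x
    have hcoord : ∀ i, (n i : ℝ) = bL.equivFun x i := by
      intro i
      have : x = bL.equivFun.symm (fun i => (n i : ℝ)) := by
        rw [Module.Basis.equivFun_symm_apply]
      rw [this, LinearEquiv.apply_symm_apply]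
    have hnu : ∀ j, 0 ≤ (A *ᵥ n) j := by
      intro j
      have : ((A *ᵥ n) j : ℝ) = ∑ i, (A j i : ℝ) * bL.equivFun x i := by
        simp only [Matrix.mulVec, dotProduct]
        push_cast
        exact Finset.sum_congr rfl fun i _ => by rw [hcoord i]
      have hxc : ∀ i, bL.equivFun x i = ∑ v ∈ s, c v * bL.equivFun v i := by
        intro i
        rw [hcx]
        rw [map_sum]
        simp [Finset.sum_apply]
      have hpos' : (0:ℝ) ≤ ((A *ᵥ n) j : ℝ) := by
        rw [this]
        have : ∑ i, (A j i : ℝ) * bL.equivFun x i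
            = ∑ v ∈ s, c v * ∑ i, (A j i : ℝ) * bL.equivFun v i := by
          simp_rw [hxc, Finset.mul_sum]
          rw [Finset.sum_comm]
          congr 1; funext i; congr 1; funext v; ring
        rw [this]
        exact Finset.sum_nonneg fun v hv => mul_nonneg (hc0 v hv) (hpos j v hv)
      exact_mod_cast hpos'
    refine ⟨fun j => ((A *ᵥ n) j).toNat, ?_⟩
    have hx' : x = ∑ j, ((A *ᵥ n) j : ℝ) • lam j := by
      rw [hxdef, hchar]
      funext i
      have : (A' *ᵥ (A *ᵥ n)) i = n i := by
        rw [Matrix.mulVec_mulVec, h2, Matrix.one_mulVec]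
      rw [← this]
      simp [Matrix.mulVec, dotProduct, hRA']
    rw [hx']
    congr 1
    funext j
    congr 1
    exact_mod_cast (Int.toNat_of_nonneg (hnu j)).symm


/-- Let `K ⊆ ℝ^m` be a pointed, full-dimensional rational polyhedral cone
and let `L ⊆ ℝ^m` be a full-rank lattice. Then there exists a ℤ-basis `λ₁, …, λ_m` of `L`
such that `K ∩ L ⊆ { ν₁λ₁ + ⋯ + ν_mλ_m : νᵢ ∈ ℕ }`. -/
theorem pointed_cone_in_positive_octant_of_lattice_basis
    (m : ℕ) (hm : 0 < m) (K : Set (Fin m → ℝ))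
    -- `K` is a rational polyhedral cone:
    (hK : ∃ s : Finset (Fin m → ℝ), (∀ v ∈ s, ∀ i, ∃ q : ℚ, v i = (q : ℝ)) ∧
      K = {x | ∃ c : (Fin m → ℝ) → ℝ, (∀ v ∈ s, 0 ≤ c v) ∧ x = ∑ v ∈ s, c v • v})
    -- `K` is pointed:
    (hpointed : K ∩ (-K) = {0})
    -- `K` is full dimensional:
    (hfull : (interior K).Nonempty)
    -- `L` is a full-rank lattice:
    (bL : Module.Basis (Fin m) ℝ (Fin m → ℝ))
    (L : AddSubgroup (Fin m → ℝ))
    (hL : L = AddSubgroup.closure (Set.range bL)) :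
    ∃ lam : Fin m → (Fin m → ℝ),
      (∀ i, lam i ∈ L) ∧
      (∀ x ∈ L, ∃! ν : Fin m → ℤ, x = ∑ i, ν i • lam i) ∧
      (∀ x ∈ K ∩ (L : Set (Fin m → ℝ)), ∃ ν : Fin m → ℕ, x = ∑ i, (ν i : ℝ) • lam i) := by
  classical
  obtain ⟨s, -, hKeq⟩ := hK
  set s' : Finset (Fin m → ℝ) := s.filter (fun v => v ≠ 0) with hs'
  -- `0` is not in the convex hull of the nonzero generators, by pointedness
  have h0' : (0 : Fin m → ℝ) ∉ convexHull ℝ (s' : Set (Fin m → ℝ)) := by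
    intro hmem
    rw [Finset.mem_convexHull'] at hmem
    obtain ⟨wt, hw0, hw1, hw2⟩ := hmem
    have hex : ∃ v₀ ∈ s', 0 < wt v₀ := by
      by_contra hall
      push_neg at hall
      have hzero : ∑ v ∈ s', wt v = 0 :=
        Finset.sum_eq_zero fun v hv => le_antisymm (hall v hv) (hw0 v hv)
      rw [hw1] at hzero
      norm_num at hzero
    obtain ⟨v₀, hv₀s, hv₀pos⟩ := hex
    have hv₀mem : v₀ ∈ s := (Finset.mem_filter.mp hv₀s).1
    have hv₀ne : v₀ ≠ 0 := (Finset.mem_filter.mp hv₀s).2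
    have hKmem : v₀ ∈ K := by
      rw [hKeq]
      refine ⟨fun v => if v = v₀ then 1 else 0, fun v _ => by by_cases h : v = v₀ <;> simp [h], ?_⟩
      rw [eq_comm]
      simp only [ite_smul, one_smul, zero_smul]
      rw [Finset.sum_ite_eq' s v₀ (fun v => v), if_pos hv₀mem]
    have hKneg : -v₀ ∈ K := by
      rw [hKeq]
      refine ⟨fun v => (if v ≠ 0 then wt v / wt v₀ else 0) - (if v = v₀ then 1 else 0), ?_, ?_⟩
      · intro v hv
        show (0:ℝ) ≤ (if v ≠ 0 then wt v / wt v₀ else 0) - (if v = v₀ then 1 else 0)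
        by_cases h1 : v = v₀
        · subst h1
          simp only [if_pos hv₀ne, if_pos rfl]
          rw [div_self (ne_of_gt hv₀pos)]
          norm_num
        · rw [if_neg h1, sub_zero]
          split
          · exact div_nonneg (hw0 v (Finset.mem_filter.mpr ⟨hv, by assumption⟩)) (le_of_lt hv₀pos)
          · exact le_rfl
      · have e1 : ∑ v ∈ s, ((if v ≠ 0 then wt v / wt v₀ else 0) - (if v = v₀ then 1 else 0)) • v
            = (∑ v ∈ s, (if v ≠ 0 then wt v / wt v₀ else 0) • v)
              - (∑ v ∈ s, (if v = v₀ then (1:ℝ) else 0) • v) := by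
          rw [← Finset.sum_sub_distrib]
          exact Finset.sum_congr rfl fun v _ => by rw [sub_smul]
        have e2 : ∑ v ∈ s, (if v ≠ 0 then wt v / wt v₀ else 0) • v
            = (wt v₀)⁻¹ • ∑ v ∈ s', wt v • v := by
          rw [hs', Finset.sum_filter, Finset.smul_sum]
          refine Finset.sum_congr rfl fun v _ => ?_
          split
          · rw [smul_smul, div_eq_inv_mul]
          · rw [zero_smul, smul_zero]
        have e3 : ∑ v ∈ s, (if v = v₀ then (1:ℝ) else 0) • v = v₀ := by
          simp only [ite_smul, one_smul, zero_smul]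
          rw [Finset.sum_ite_eq' s v₀ (fun v => v), if_pos hv₀mem]
        rw [e1, e2, e3, hw2, smul_zero, zero_sub]
    have hvmem : v₀ ∈ K ∩ (-K) := ⟨hKmem, Set.mem_neg.mpr hKneg⟩
    rw [hpointed] at hvmem
    exact hv₀ne hvmem
  -- transfer to coordinates
  set t : Finset (Fin m → ℝ) := s'.image bL.equivFun with ht
  have h0t : (0 : Fin m → ℝ) ∉ convexHull ℝ (t : Set (Fin m → ℝ)) := by
    intro hmem
    rw [ht, Finset.coe_image] at hmem
    have himg : bL.equivFun '' (s' : Set (Fin m → ℝ)) =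
        (bL.equivFun : (Fin m → ℝ) →ₗ[ℝ] (Fin m → ℝ)) '' (s' : Set (Fin m → ℝ)) := rfl
    rw [himg, ← LinearMap.image_convexHull] at hmem
    obtain ⟨z, hz, hz0⟩ := hmem
    have : z = 0 := by
      have := bL.equivFun.injective (a₁ := z) (a₂ := 0)
      simp only [map_zero] at this
      exact this hz0
    rw [this] at hz
    exact h0' hz
  obtain ⟨A, A', h1, h2, hApos⟩ := aux_unimodular m t h0t
  apply aux_main m K s hKeq bL L hL A A' h1 h2
  intro j v hv
  by_cases hvz : v = 0
  · subst hvz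
    simp
  · exact hApos j (bL.equivFun v) (Finset.mem_image.mpr ⟨v, Finset.mem_filter.mpr ⟨hv, hvz⟩, rfl⟩)
end

section
/- Let C ⊆ ℝ^m be a convex cone with nonempty topological interior and let M ⊆ ℝ^m be a full-rank lattice. Then the additive subgroup of ℝ^m generated by the set C ∩ M is equal to M. -/
/-- Let `C ⊆ ℝ^m` be a convex cone (closed under addition and under
multiplication by positive reals) with nonempty topological interior, and let `M ⊆ ℝ^m`
be a full-rank lattice (the additive subgroup generated by an ℝ-basis of `ℝ^m`).
Then the additive subgroup generated by `C ∩ M` is `M`. -/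
theorem cone_cap_lattice_generates_lattice
    (m : ℕ) (hm : 0 < m) (C : Set (Fin m → ℝ))
    (hCadd : ∀ x ∈ C, ∀ y ∈ C, x + y ∈ C)
    (hCsmul : ∀ (t : ℝ), 0 < t → ∀ x ∈ C, t • x ∈ C)
    (hCint : (interior C).Nonempty)
    (bM : Module.Basis (Fin m) ℝ (Fin m → ℝ))
    (M : AddSubgroup (Fin m → ℝ))
    (hM : M = AddSubgroup.closure (Set.range bM)) :
    AddSubgroup.closure (C ∩ (M : Set (Fin m → ℝ))) = M := by
  set K : ℝ := ∑ i, ‖bM i‖ with hKdef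
  have hK0 : 0 ≤ K := Finset.sum_nonneg fun i _ => norm_nonneg _
  have hKi : ∀ i, ‖bM i‖ ≤ K := fun i =>
    Finset.single_le_sum (fun j _ => norm_nonneg (bM j)) (Finset.mem_univ i)
  -- every point is within K of a lattice point
  have approx : ∀ y : Fin m → ℝ, ∃ p ∈ M, ‖y - p‖ ≤ K := by
    intro y
    set c : Fin m → ℝ := fun i => bM.repr y i with hc
    refine ⟨∑ i, (⌊c i⌋ : ℤ) • bM i, ?_, ?_⟩
    · rw [hM]
      exact AddSubgroup.sum_mem _ fun i _ => AddSubgroup.zsmul_mem _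
        (AddSubgroup.subset_closure (Set.mem_range_self i)) _
    · have hy : y = ∑ i, c i • bM i := (bM.sum_repr y).symm
      have heq : y - ∑ i, (⌊c i⌋ : ℤ) • bM i
          = ∑ i, Int.fract (c i) • bM i := by
        conv_lhs => rw [hy]
        rw [← Finset.sum_sub_distrib]
        refine Finset.sum_congr rfl fun j _ => ?_
        rw [← Int.cast_smul_eq_zsmul ℝ, ← sub_smul]
        rfl
      rw [heq]
      calc ‖∑ i, Int.fract (c i) • bM i‖
          ≤ ∑ i, ‖Int.fract (c i) • bM i‖ := norm_sum_le _ _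
        _ ≤ ∑ i, ‖bM i‖ := by
            refine Finset.sum_le_sum fun i _ => ?_
            rw [norm_smul, Real.norm_eq_abs,
              abs_of_nonneg (Int.fract_nonneg _)]
            nlinarith [Int.fract_lt_one (c i), norm_nonneg (bM i)]
  obtain ⟨x₀, hx₀⟩ := hCint
  obtain ⟨ε, hε, hball⟩ := Metric.mem_nhds_iff.mp (mem_interior_iff_mem_nhds.mp hx₀)
  set t : ℝ := (2 * K + 1) / ε with htdef
  have ht : 0 < t := div_pos (by linarith) hε
  have hcone : ∀ z : Fin m → ℝ, ‖z - t • x₀‖ < 2 * K + 1 → z ∈ C := by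
    intro z hz
    have h1 : t⁻¹ • z ∈ Metric.ball x₀ ε := by
      rw [Metric.mem_ball, dist_eq_norm]
      have heq : t⁻¹ • z - x₀ = t⁻¹ • (z - t • x₀) := by
        rw [smul_sub, smul_smul, inv_mul_cancel₀ ht.ne', one_smul]
      rw [heq, norm_smul, Real.norm_eq_abs, abs_of_pos (inv_pos.mpr ht)]
      have h2 : t⁻¹ * (2 * K + 1) = ε := by
        rw [htdef]; field_simp
      calc t⁻¹ * ‖z - t • x₀‖ < t⁻¹ * (2 * K + 1) := by
            exact mul_lt_mul_of_pos_left hz (inv_pos.mpr ht)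
        _ = ε := h2
    have h3 := hCsmul t ht _ (hball h1)
    rwa [smul_inv_smul₀ ht.ne'] at h3
  obtain ⟨p, hpM, hp⟩ := approx (t • x₀)
  have hp' : ‖p - t • x₀‖ ≤ K := by rwa [norm_sub_rev] at hp
  apply le_antisymm
  · exact (AddSubgroup.closure_le M).mpr Set.inter_subset_right
  · rw [hM, AddSubgroup.closure_le]
    rw [← hM]
    rintro _ ⟨i, rfl⟩
    have hpC : p ∈ C := hcone p (by linarith)
    have hpbC : p + bM i ∈ C := by
      refine hcone _ ?_
      calc ‖p + bM i - t • x₀‖ = ‖(p - t • x₀) + bM i‖ := by ring_nf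
        _ ≤ ‖p - t • x₀‖ + ‖bM i‖ := norm_add_le _ _
        _ < 2 * K + 1 := by have := hKi i; linarith
    have hbM : bM i ∈ M := by rw [hM]; exact AddSubgroup.subset_closure ⟨i, rfl⟩
    have h1 : p + bM i ∈ AddSubgroup.closure (C ∩ (M : Set (Fin m → ℝ))) :=
      AddSubgroup.subset_closure ⟨hpbC, M.add_mem hpM hbM⟩
    have h2 : p ∈ AddSubgroup.closure (C ∩ (M : Set (Fin m → ℝ))) :=
      AddSubgroup.subset_closure ⟨hpC, hpM⟩
    have := AddSubgroup.sub_mem _ h1 h2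
    simpa using this
end

section
/- Let m, k ∈ ℕ and let c, c′ : ℕ^m × ℕ^k → [0, ∞). Then for every r ∈ [0, ∞)^m and s ∈ [0, ∞)^k the following inequality holds in [0, ∞]: Σ_{μ ∈ ℕ^m} Σ_{δ ∈ ℕ^k} ( Σ_{η + η′ = δ} c(μ, η) · c′(μ, η′) ) · s^δ · r^μ ≤ ( Σ_{μ ∈ ℕ^m} Σ_{η ∈ ℕ^k} c(μ, η) · s^η · (√r)^μ ) · ( Σ_{μ ∈ ℕ^m} Σ_{η′ ∈ ℕ^k} c′(μ, η′) · s^{η′} · (√r)^μ ), where √r ∈ [0, ∞)^m is the coordinatewise square root of r, the inner sum Σ_{η + η′ = δ} ranges over all pairs (η, η′) ∈ ℕ^k × ℕ^k with η + η′ = δ, and all sums are interpreted as (possibly infinite) sums of nonnegative extended reals. -/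
open scoped ENNReal NNReal

private def sigmaAddEquiv (k : ℕ) :
    (Σ δ : Fin k → ℕ, {p : (Fin k → ℕ) × (Fin k → ℕ) // p.1 + p.2 = δ}) ≃
      ((Fin k → ℕ) × (Fin k → ℕ)) where
  toFun x := x.2.1
  invFun p := ⟨p.1 + p.2, ⟨p, rfl⟩⟩
  left_inv := by rintro ⟨δ, ⟨p, rfl⟩⟩; rfl
  right_inv p := rfl

/-- The term-by-term Cauchy–Schwarz-type estimate for Hadamard products:
for nonnegative coefficient families `c, c'` and nonnegative radii `r, s`,
`Σ_{μ,δ} (Σ_{η+η′=δ} c(μ,η) c′(μ,η′)) s^δ r^μ ≤ (Σ_{μ,η} c(μ,η) s^η √r^μ) (Σ_{μ,η′} c′(μ,η′) s^{η′} √r^μ)`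
in the extended nonnegative reals. -/
theorem hadamard_coefficient_estimate
    (m k : ℕ) (c c' : (Fin m → ℕ) → (Fin k → ℕ) → ℝ≥0)
    (r : Fin m → ℝ≥0) (s : Fin k → ℝ≥0) :
    (∑' μ : Fin m → ℕ, ∑' δ : Fin k → ℕ,
        (∑' p : {p : (Fin k → ℕ) × (Fin k → ℕ) // p.1 + p.2 = δ},
            (c μ p.1.1 : ℝ≥0∞) * (c' μ p.1.2 : ℝ≥0∞)) *
          (∏ i, (s i : ℝ≥0∞) ^ δ i) * (∏ i, (r i : ℝ≥0∞) ^ μ i))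
      ≤ (∑' μ : Fin m → ℕ, ∑' η : Fin k → ℕ,
            (c μ η : ℝ≥0∞) * (∏ i, (s i : ℝ≥0∞) ^ η i) *
              (∏ i, (NNReal.sqrt (r i) : ℝ≥0∞) ^ μ i)) *
        (∑' μ : Fin m → ℕ, ∑' η' : Fin k → ℕ,
            (c' μ η' : ℝ≥0∞) * (∏ i, (s i : ℝ≥0∞) ^ η' i) *
              (∏ i, (NNReal.sqrt (r i) : ℝ≥0∞) ^ μ i)) := by
  set A : (Fin m → ℕ) → ℝ≥0∞ := fun μ => ∑' η : Fin k → ℕ,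
    (c μ η : ℝ≥0∞) * ∏ i, (s i : ℝ≥0∞) ^ η i with hA
  set B : (Fin m → ℕ) → ℝ≥0∞ := fun μ => ∑' η : Fin k → ℕ,
    (c' μ η : ℝ≥0∞) * ∏ i, (s i : ℝ≥0∞) ^ η i with hB
  have hsq : ∀ μ : Fin m → ℕ,
      (∏ i, (NNReal.sqrt (r i) : ℝ≥0∞) ^ μ i) * (∏ i, (NNReal.sqrt (r i) : ℝ≥0∞) ^ μ i)
        = ∏ i, (r i : ℝ≥0∞) ^ μ i := by
    intro μ
    rw [← Finset.prod_mul_distrib]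
    refine Finset.prod_congr rfl fun i _ => ?_
    rw [← mul_pow, ← ENNReal.coe_mul, NNReal.mul_self_sqrt]
  -- identify the inner double sum with A μ * B μ
  have key : ∀ μ : Fin m → ℕ,
      (∑' δ : Fin k → ℕ,
        (∑' p : {p : (Fin k → ℕ) × (Fin k → ℕ) // p.1 + p.2 = δ},
            (c μ p.1.1 : ℝ≥0∞) * (c' μ p.1.2 : ℝ≥0∞)) *
          (∏ i, (s i : ℝ≥0∞) ^ δ i)) = A μ * B μ := by
    intro μ
    calc (∑' δ : Fin k → ℕ,
        (∑' p : {p : (Fin k → ℕ) × (Fin k → ℕ) // p.1 + p.2 = δ},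
            (c μ p.1.1 : ℝ≥0∞) * (c' μ p.1.2 : ℝ≥0∞)) *
          (∏ i, (s i : ℝ≥0∞) ^ δ i))
        = ∑' δ : Fin k → ℕ, ∑' p : {p : (Fin k → ℕ) × (Fin k → ℕ) // p.1 + p.2 = δ},
            (c μ p.1.1 : ℝ≥0∞) * (c' μ p.1.2 : ℝ≥0∞) * ∏ i, (s i : ℝ≥0∞) ^ δ i := by
          simp_rw [ENNReal.tsum_mul_right]
      _ = ∑' x : Σ δ : Fin k → ℕ, {p : (Fin k → ℕ) × (Fin k → ℕ) // p.1 + p.2 = δ},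
            (c μ x.2.1.1 : ℝ≥0∞) * (c' μ x.2.1.2 : ℝ≥0∞) * ∏ i, (s i : ℝ≥0∞) ^ x.1 i :=
          (ENNReal.tsum_sigma' (fun x : Σ δ : Fin k → ℕ,
              {p : (Fin k → ℕ) × (Fin k → ℕ) // p.1 + p.2 = δ} =>
            (c μ x.2.1.1 : ℝ≥0∞) * (c' μ x.2.1.2 : ℝ≥0∞) * ∏ i, (s i : ℝ≥0∞) ^ x.1 i)).symm
      _ = ∑' x : Σ δ : Fin k → ℕ, {p : (Fin k → ℕ) × (Fin k → ℕ) // p.1 + p.2 = δ},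
            (fun p : (Fin k → ℕ) × (Fin k → ℕ) =>
              (c μ p.1 : ℝ≥0∞) * (c' μ p.2 : ℝ≥0∞) * ∏ i, (s i : ℝ≥0∞) ^ (p.1 i + p.2 i))
              (sigmaAddEquiv k x) := by
          refine tsum_congr ?_
          rintro ⟨δ, ⟨p, rfl⟩⟩
          rfl
      _ = ∑' p : (Fin k → ℕ) × (Fin k → ℕ),
            (c μ p.1 : ℝ≥0∞) * (c' μ p.2 : ℝ≥0∞) * ∏ i, (s i : ℝ≥0∞) ^ (p.1 i + p.2 i) :=
          (sigmaAddEquiv k).tsum_eq (fun p : (Fin k → ℕ) × (Fin k → ℕ) =>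
            (c μ p.1 : ℝ≥0∞) * (c' μ p.2 : ℝ≥0∞) * ∏ i, (s i : ℝ≥0∞) ^ (p.1 i + p.2 i))
      _ = ∑' p : (Fin k → ℕ) × (Fin k → ℕ),
            ((c μ p.1 : ℝ≥0∞) * ∏ i, (s i : ℝ≥0∞) ^ p.1 i) *
            ((c' μ p.2 : ℝ≥0∞) * ∏ i, (s i : ℝ≥0∞) ^ p.2 i) := by
          refine tsum_congr fun p => ?_
          simp_rw [pow_add, Finset.prod_mul_distrib]
          ring
      _ = ∑' η : Fin k → ℕ, ∑' η' : Fin k → ℕ,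
            ((c μ η : ℝ≥0∞) * ∏ i, (s i : ℝ≥0∞) ^ η i) *
            ((c' μ η' : ℝ≥0∞) * ∏ i, (s i : ℝ≥0∞) ^ η' i) :=
          ENNReal.tsum_prod (f := fun η η' =>
            ((c μ η : ℝ≥0∞) * ∏ i, (s i : ℝ≥0∞) ^ η i) *
            ((c' μ η' : ℝ≥0∞) * ∏ i, (s i : ℝ≥0∞) ^ η' i))
      _ = A μ * B μ := by
          simp_rw [ENNReal.tsum_mul_left, ENNReal.tsum_mul_right]
          rfl
  calc (∑' μ : Fin m → ℕ, ∑' δ : Fin k → ℕ,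
        (∑' p : {p : (Fin k → ℕ) × (Fin k → ℕ) // p.1 + p.2 = δ},
            (c μ p.1.1 : ℝ≥0∞) * (c' μ p.1.2 : ℝ≥0∞)) *
          (∏ i, (s i : ℝ≥0∞) ^ δ i) * (∏ i, (r i : ℝ≥0∞) ^ μ i))
      = ∑' μ : Fin m → ℕ, (A μ * ∏ i, (NNReal.sqrt (r i) : ℝ≥0∞) ^ μ i) *
          (B μ * ∏ i, (NNReal.sqrt (r i) : ℝ≥0∞) ^ μ i) := by
        refine tsum_congr fun μ => ?_
        rw [show (∑' δ : Fin k → ℕ,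
          (∑' p : {p : (Fin k → ℕ) × (Fin k → ℕ) // p.1 + p.2 = δ},
              (c μ p.1.1 : ℝ≥0∞) * (c' μ p.1.2 : ℝ≥0∞)) *
            (∏ i, (s i : ℝ≥0∞) ^ δ i) * (∏ i, (r i : ℝ≥0∞) ^ μ i))
          = (∑' δ : Fin k → ℕ,
          (∑' p : {p : (Fin k → ℕ) × (Fin k → ℕ) // p.1 + p.2 = δ},
              (c μ p.1.1 : ℝ≥0∞) * (c' μ p.1.2 : ℝ≥0∞)) *
            (∏ i, (s i : ℝ≥0∞) ^ δ i)) * (∏ i, (r i : ℝ≥0∞) ^ μ i) from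
          ENNReal.tsum_mul_right, key μ, ← hsq μ]
        ring
    _ ≤ (∑' μ : Fin m → ℕ, A μ * ∏ i, (NNReal.sqrt (r i) : ℝ≥0∞) ^ μ i) *
        (∑' μ : Fin m → ℕ, B μ * ∏ i, (NNReal.sqrt (r i) : ℝ≥0∞) ^ μ i) := by
        rw [← ENNReal.tsum_mul_left]
        refine ENNReal.tsum_le_tsum fun μ => ?_
        exact mul_le_mul_left (ENNReal.le_tsum μ) _
    _ = _ := by
        simp_rw [hA, hB, ENNReal.tsum_mul_right]
end

section
/- Let n be a positive integer, let p ∈ ℂ[y₁, …, y_n] be a polynomial, and let ᾱ ∈ ℂ^n with ᾱ₁ ≠ −1. Then there exists a unique polynomial q ∈ ℂ[y₁, …, y_n] such that the total degree of q equals the total degree of p and, for every x in the open positive orthant (ℝ_{>0})^n, ∂₁ [ x₁ · x^ᾱ · q(log x₁, …, log x_n) ] = x^ᾱ · p(log x₁, …, log x_n), where ∂₁ denotes the partial derivative with respect to x₁. -/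
/-- `x^ᾱ = exp(Σᵢ ᾱᵢ log xᵢ)` for `x` in the positive orthant. -/
noncomputable def xpow {n : ℕ} (x : Fin n → ℝ) (α : Fin n → ℂ) : ℂ :=
  Complex.exp (∑ i, α i * (Real.log (x i) : ℂ))

/-- Evaluation of a polynomial `p ∈ ℂ[y₁,…,yₙ]` at `(log x₁, …, log xₙ)`. -/
noncomputable def pevalLog {n : ℕ} (p : MvPolynomial (Fin n) ℂ) (x : Fin n → ℝ) : ℂ :=
  MvPolynomial.eval (fun i => (Real.log (x i) : ℂ)) p

/-- The partial derivative `∂ⱼ f` of a ℂ-valued function on `ℝ^n`. -/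
noncomputable def pd {n : ℕ} (f : (Fin n → ℝ) → ℂ) (j : Fin n) (x : Fin n → ℝ) : ℂ :=
  deriv (fun t : ℝ => f (Function.update x j t)) (x j)


open MvPolynomial

lemma coeff_pderiv' {σ : Type*} [DecidableEq σ] (i : σ) (f : MvPolynomial σ ℂ) (m : σ →₀ ℕ) :
    coeff m (pderiv i f) = coeff (m + Finsupp.single i 1) f * (m i + 1) := by
  induction f using MvPolynomial.induction_on' with
  | add p q hp hq => simp [hp, hq, add_mul]
  | monomial s a =>
    rw [pderiv_monomial]
    rcases eq_or_ne s (m + Finsupp.single i 1) with rfl | hs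
    · rw [coeff_monomial, if_pos, coeff_monomial, if_pos rfl]
      · simp [Finsupp.add_apply, Finsupp.single_apply]
      · ext j
        by_cases hj : j = i
        · subst hj; simp
        · simp [Finsupp.single_apply, hj]
    · rw [coeff_monomial, coeff_monomial, if_neg hs, zero_mul]
      rcases eq_or_ne (s - Finsupp.single i 1) m with he | he
      · rw [if_pos he]
        rcases Nat.eq_zero_or_pos (s i) with h0 | h0
        · simp [h0]
        · exfalso; apply hs
          ext j
          have := DFunLike.congr_fun he j
          simp only [Finsupp.coe_tsub, Pi.sub_apply] at this
          by_cases hj : j = i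
          · subst hj
            simp [Finsupp.single_apply] at this ⊢
            omega
          · simp [Finsupp.single_apply, Ne.symm hj] at this ⊢
            omega
      · rw [if_neg he]

lemma totalDegree_pderiv_lt' {σ : Type*} [DecidableEq σ] (i : σ) (f : MvPolynomial σ ℂ)
    (hf : pderiv i f ≠ 0) : (pderiv i f).totalDegree < f.totalDegree := by
  have h0 : f.totalDegree ≠ 0 := by
    intro h
    apply hf
    ext m
    have hz : coeff (m + Finsupp.single i 1) f = 0 := by
      by_contra hc
      have hm := (totalDegree_eq_zero_iff σ f).mp h _ (mem_support_iff.mpr hc) i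
      simp [Finsupp.add_apply, Finsupp.single_apply] at hm
    rw [coeff_pderiv', hz, zero_mul, coeff_zero]
  rw [totalDegree]
  refine (Finset.sup_lt_iff (by
    have := Nat.pos_of_ne_zero h0
    exact this)).mpr ?_
  intro m hm
  have hc : coeff (m + Finsupp.single i 1) f ≠ 0 := by
    intro h; rw [mem_support_iff, coeff_pderiv', h, zero_mul] at hm; exact hm rfl
  have hle := le_totalDegree (mem_support_iff.mpr hc)
  have hsum : (m + Finsupp.single i 1).sum (fun _ e => e) = (m.sum fun _ e => e) + 1 := by
    rw [Finsupp.sum_add_index'] <;> simp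
  simp only [hsum] at hle
  omega

lemma iter_pderiv_zero {σ : Type*} [DecidableEq σ] (i : σ) (k : ℕ) :
    (⇑(pderiv i))^[k] (0 : MvPolynomial σ ℂ) = 0 := by
  induction k with
  | zero => rfl
  | succ k ih => rw [Function.iterate_succ_apply', ih, map_zero]

lemma iter_pderiv_vanish {σ : Type*} [DecidableEq σ] (i : σ) :
    ∀ k (f : MvPolynomial σ ℂ), f.totalDegree < k → (⇑(pderiv i))^[k] f = 0 := by
  intro k
  induction k with
  | zero => exact fun f h => absurd h (Nat.not_lt_zero _)
  | succ k ih =>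
    intro f h
    rw [Function.iterate_succ_apply]
    by_cases hd : pderiv i f = 0
    · rw [hd, iter_pderiv_zero]
    · exact ih _ (by have := totalDegree_pderiv_lt' i f hd; omega)

lemma eval_real_eq_zero {n : ℕ} (r : MvPolynomial (Fin n) ℂ)
    (h : ∀ y : Fin n → ℝ, eval (fun i => (y i : ℂ)) r = 0) : r = 0 := by
  classical
  set u : MvPolynomial (Fin n) ℝ :=
    ∑ m ∈ r.support, monomial m ((coeff m r).re) with hu
  set v : MvPolynomial (Fin n) ℝ :=
    ∑ m ∈ r.support, monomial m ((coeff m r).im) with hv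
  have keyre : ∀ y : Fin n → ℝ, eval y u = (eval (fun i => (y i : ℂ)) r).re := by
    intro y
    rw [hu, map_sum, eval_eq', Complex.re_sum]
    refine Finset.sum_congr rfl fun d _ => ?_
    have hc : (∏ i, ((y i : ℂ)) ^ d i) = ((∏ i, y i ^ d i : ℝ) : ℂ) := by
      push_cast; rfl
    rw [hc, eval_monomial, Finsupp.prod_fintype _ _ (fun i => pow_zero _)]
    rw [Complex.mul_re, Complex.ofReal_re, Complex.ofReal_im, mul_zero, sub_zero]
  have keyim : ∀ y : Fin n → ℝ, eval y v = (eval (fun i => (y i : ℂ)) r).im := by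
    intro y
    rw [hv, map_sum, eval_eq', Complex.im_sum]
    refine Finset.sum_congr rfl fun d _ => ?_
    have hc : (∏ i, ((y i : ℂ)) ^ d i) = ((∏ i, y i ^ d i : ℝ) : ℂ) := by
      push_cast; rfl
    rw [hc, eval_monomial, Finsupp.prod_fintype _ _ (fun i => pow_zero _)]
    rw [Complex.mul_im, Complex.ofReal_re, Complex.ofReal_im, mul_zero, zero_add]
  have hu0 : u = 0 := by
    apply MvPolynomial.funext
    intro y
    rw [keyre, h y, Complex.zero_re, map_zero]
  have hv0 : v = 0 := by
    apply MvPolynomial.funext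
    intro y
    rw [keyim, h y, Complex.zero_im, map_zero]
  have hcu : ∀ m, coeff m u = (coeff m r).re := by
    intro m
    rw [hu, coeff_sum]
    simp only [coeff_monomial, Finset.sum_ite_eq' r.support]
    by_cases hm : m ∈ r.support
    · rw [if_pos hm]
    · rw [if_neg hm, notMem_support_iff.mp hm]
      simp
  have hcv : ∀ m, coeff m v = (coeff m r).im := by
    intro m
    rw [hv, coeff_sum]
    simp only [coeff_monomial, Finset.sum_ite_eq' r.support]
    by_cases hm : m ∈ r.support
    · rw [if_pos hm]
    · rw [if_neg hm, notMem_support_iff.mp hm]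
      simp
  ext m
  have h1 := hcu m
  have h2 := hcv m
  rw [hu0, coeff_zero] at h1
  rw [hv0, coeff_zero] at h2
  rw [coeff_zero]
  exact Complex.ext h1.symm h2.symm

lemma hasDerivAt_eval_update {n : ℕ} (c : Fin n → ℂ) (i₀ : Fin n)
    (q : MvPolynomial (Fin n) ℂ) (z : ℂ) :
    HasDerivAt (fun w => eval (Function.update c i₀ w) q)
      (eval (Function.update c i₀ z) (pderiv i₀ q)) z := by
  induction q using MvPolynomial.induction_on with
  | C a =>
    simp only [eval_C, pderiv_C, eval_zero]
    exact hasDerivAt_const z a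
  | add p q hp hq =>
    simp only [map_add]
    exact hp.add hq
  | mul_X p i hp =>
    simp only [map_mul, eval_X]
    by_cases hi : i = i₀
    · subst hi
      have := hp.mul (hasDerivAt_id z)
      simp only [Function.update_self] at this ⊢
      refine this.congr_deriv ?_
      simp [pderiv_X_self, mul_one]
      ring
    · have := hp.mul_const (Function.update c i₀ z i)
      have he : ∀ w : ℂ, Function.update c i₀ w i = c i := fun w =>
        Function.update_of_ne hi _ _
      simp only [he] at this ⊢
      refine this.congr_deriv ?_
      simp [pderiv_X_of_ne hi, Function.update_of_ne hi, mul_comm]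

lemma pd_formula {n : ℕ} (ᾱ : Fin n → ℂ) (i₀ : Fin n) (q : MvPolynomial (Fin n) ℂ)
    (x : Fin n → ℝ) (hx : ∀ i, 0 < x i) :
    pd (fun y => (y i₀ : ℂ) * xpow y ᾱ * pevalLog q y) i₀ x
      = xpow x ᾱ * pevalLog ((ᾱ i₀ + 1) • q + pderiv i₀ q) x := by
  classical
  set t₀ := x i₀ with ht₀def
  have ht₀ : 0 < t₀ := hx i₀
  set L : Fin n → ℂ := fun i => (Real.log (x i) : ℂ) with hL
  have hupd : ∀ t : ℝ, (fun i => (Real.log (Function.update x i₀ t i) : ℂ))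
      = Function.update L i₀ ((Real.log t : ℝ) : ℂ) := by
    intro t; funext i
    by_cases hi : i = i₀
    · subst hi; simp
    · simp [Function.update_of_ne hi, hL]
  have hlog : HasDerivAt (fun t : ℝ => ((Real.log t : ℝ) : ℂ)) ((t₀⁻¹ : ℝ) : ℂ) t₀ :=
    HasDerivAt.ofReal_comp (Real.hasDerivAt_log ht₀.ne')
  have hsum : HasDerivAt
      (fun t : ℝ => ∑ i, ᾱ i * Function.update L i₀ ((Real.log t : ℝ) : ℂ) i)
      (ᾱ i₀ * ((t₀⁻¹ : ℝ) : ℂ)) t₀ := by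
    have h := HasDerivAt.fun_sum (x := t₀) (u := Finset.univ)
      (A := fun i (t : ℝ) => ᾱ i * Function.update L i₀ ((Real.log t : ℝ) : ℂ) i)
      (A' := fun i => if i = i₀ then ᾱ i₀ * ((t₀⁻¹ : ℝ) : ℂ) else 0) ?_
    · simpa using h
    · intro i _
      by_cases hi : i = i₀
      · subst hi
        simp only [Function.update_self, if_pos rfl]
        exact hlog.const_mul (ᾱ i)
      · simp only [Function.update_of_ne hi, if_neg hi]
        exact hasDerivAt_const _ _
  have hexp := hsum.cexp
  have hG := hasDerivAt_eval_update L i₀ q ((Real.log t₀ : ℝ) : ℂ)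
  have hQ := hG.scomp_of_eq t₀ hlog rfl
  have hid : HasDerivAt (fun t : ℝ => (t : ℂ)) 1 t₀ := by
    simpa using HasDerivAt.ofReal_comp (hasDerivAt_id t₀)
  have htot := (hid.fun_mul hexp).fun_mul hQ
  rw [pd]
  have hfun : (fun t : ℝ =>
      ((Function.update x i₀ t i₀ : ℝ) : ℂ) * xpow (Function.update x i₀ t) ᾱ
        * pevalLog q (Function.update x i₀ t))
      = fun t : ℝ => (t : ℂ)
          * Complex.exp (∑ i, ᾱ i * Function.update L i₀ ((Real.log t : ℝ) : ℂ) i)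
          * ((fun w => eval (Function.update L i₀ w) q) ∘ fun t : ℝ => ((Real.log t : ℝ) : ℂ)) t := by
    funext t
    simp only [Function.update_self, xpow, pevalLog, Function.comp_apply,
      congrFun (hupd t)]
  rw [hfun, htot.deriv]
  simp only [Function.comp_apply]
  have hLt : Function.update L i₀ ((Real.log t₀ : ℝ) : ℂ) = L := by
    have : ((Real.log t₀ : ℝ) : ℂ) = L i₀ := by rw [hL]
    rw [this, Function.update_eq_self]
  rw [hLt]
  have hE : Complex.exp (∑ i, ᾱ i * L i) = xpow x ᾱ := rfl
  have hQx : eval L q = pevalLog q x := rfl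
  have hQd : eval L (pderiv i₀ q) = pevalLog (pderiv i₀ q) x := rfl
  rw [hE, hQx, hQd]
  have hRHS : pevalLog ((ᾱ i₀ + 1) • q + pderiv i₀ q) x
      = (ᾱ i₀ + 1) * pevalLog q x + pevalLog (pderiv i₀ q) x := by
    simp [pevalLog, smul_eval]
  rw [hRHS]
  have ht0ne : (t₀ : ℂ) ≠ 0 := by exact_mod_cast ht₀.ne'
  rw [smul_eq_mul]
  push_cast
  field_simp
  ring

lemma iter_pderiv_totalDegree_le {σ : Type*} [DecidableEq σ] (i : σ) (k : ℕ)
    (f : MvPolynomial σ ℂ) : ((⇑(pderiv i))^[k] f).totalDegree ≤ f.totalDegree := by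
  induction k with
  | zero => exact le_rfl
  | succ k ih =>
    rw [Function.iterate_succ_apply']
    by_cases hd : pderiv i ((⇑(pderiv i))^[k] f) = 0
    · rw [hd]; simp
    · exact le_trans (totalDegree_pderiv_lt' _ _ hd).le ih

lemma totalDegree_smul_eq {σ : Type*} (s : ℂ) (hs : s ≠ 0) (f : MvPolynomial σ ℂ) :
    (s • f).totalDegree = f.totalDegree := by
  refine le_antisymm (totalDegree_smul_le _ _) ?_
  conv_lhs => rw [show f = s⁻¹ • (s • f) by rw [smul_smul, inv_mul_cancel₀ hs, one_smul]]
  exact totalDegree_smul_le _ _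

/-- **Lemma `lemma:antilog`.** If `ᾱ₁ ≠ −1`, there is a unique polynomial
`q` with `deg q = deg p` and `∂₁[x₁ x^ᾱ q(log x)] = x^ᾱ p(log x)` on the positive
orthant. -/
theorem antiderivative_polynomial_exists_unique
    (n : ℕ) (hn : 0 < n) (p : MvPolynomial (Fin n) ℂ) (ᾱ : Fin n → ℂ)
    (hᾱ : ᾱ ⟨0, hn⟩ ≠ -1) :
    ∃! q : MvPolynomial (Fin n) ℂ,
      q.totalDegree = p.totalDegree ∧
      ∀ x : Fin n → ℝ, (∀ i, 0 < x i) →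
        pd (fun y => (y ⟨0, hn⟩ : ℂ) * xpow y ᾱ * pevalLog q y) ⟨0, hn⟩ x
          = xpow x ᾱ * pevalLog p x := by
  classical
  set i₀ : Fin n := ⟨0, hn⟩ with hi₀
  set c : ℂ := ᾱ i₀ + 1 with hc_def
  have hc : c ≠ 0 := by
    intro h
    rw [hc_def] at h
    exact hᾱ (by linear_combination h)
  set N := p.totalDegree with hN
  set a : ℕ → MvPolynomial (Fin n) ℂ :=
    fun k => ((-1 : ℂ) ^ k * (c⁻¹) ^ k) • (⇑(pderiv i₀))^[k] p with ha
  set q₀ : MvPolynomial (Fin n) ℂ :=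
    ∑ k ∈ Finset.range (N + 1),
      ((-1 : ℂ) ^ k * (c⁻¹) ^ (k + 1)) • (⇑(pderiv i₀))^[k] p with hq₀
  have hTq₀ : c • q₀ + pderiv i₀ q₀ = p := by
    have h1 : c • q₀ = ∑ k ∈ Finset.range (N + 1), a k := by
      rw [hq₀, Finset.smul_sum]
      refine Finset.sum_congr rfl fun k _ => ?_
      simp only [ha, smul_smul]
      congr 1
      rw [pow_succ]
      field_simp
    have h2 : pderiv i₀ q₀ = -∑ k ∈ Finset.range (N + 1), a (k + 1) := by
      rw [hq₀, map_sum, ← Finset.sum_neg_distrib]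
      refine Finset.sum_congr rfl fun k _ => ?_
      rw [Derivation.map_smul, ← Function.iterate_succ_apply' (⇑(pderiv i₀))]
      simp only [ha]
      rw [← neg_smul]
      congr 1
      rw [pow_succ]
      ring
    have h5 : a (N + 1) = 0 := by
      simp only [ha]
      rw [iter_pderiv_vanish i₀ (N + 1) p (by omega), smul_zero]
    have h4 := Finset.sum_range_succ' a (N + 1)
    rw [Finset.sum_range_succ, h5, add_zero] at h4
    have h0 : a 0 = p := by simp [ha]
    rw [h1, h2, h4, h0]
    abel
  -- the degree of q₀
  have hsmul_iter_lt : ∀ k : ℕ, 0 < N →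
      (((-1 : ℂ) ^ (k + 1) * (c⁻¹) ^ (k + 2)) • (⇑(pderiv i₀))^[k + 1] p).totalDegree < N := by
    intro k hNpos
    by_cases hz : (⇑(pderiv i₀))^[k + 1] p = 0
    · rw [hz, smul_zero]
      simp only [totalDegree_zero]
      exact hNpos
    · refine lt_of_le_of_lt (totalDegree_smul_le _ _) ?_
      rw [Function.iterate_succ_apply'] at hz ⊢
      calc ((pderiv i₀) ((⇑(pderiv i₀))^[k] p)).totalDegree
          < ((⇑(pderiv i₀))^[k] p).totalDegree := totalDegree_pderiv_lt' _ _ hz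
        _ ≤ N := iter_pderiv_totalDegree_le i₀ k p
  have hdeg : q₀.totalDegree = N := by
    have hsplit := Finset.sum_range_succ'
      (fun k => ((-1 : ℂ) ^ k * (c⁻¹) ^ (k + 1)) • (⇑(pderiv i₀))^[k] p) N
    have hfirst : ((-1 : ℂ) ^ 0 * (c⁻¹) ^ (0 + 1)) • (⇑(pderiv i₀))^[0] p = c⁻¹ • p := by
      simp
    have hdegfirst : ((c⁻¹ : ℂ) • p).totalDegree = N :=
      totalDegree_smul_eq _ (inv_ne_zero hc) p
    rcases Nat.eq_zero_or_pos N with hN0 | hNpos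
    · rw [hq₀, hN0]
      simp only [zero_add, Finset.sum_range_one]
      rw [hfirst, hdegfirst]
      exact hN0
    · rw [hq₀, hsplit, hfirst]
      have hrest : (∑ k ∈ Finset.range N,
          ((-1 : ℂ) ^ (k + 1) * (c⁻¹) ^ (k + 1 + 1)) • (⇑(pderiv i₀))^[k + 1] p).totalDegree < N := by
        refine lt_of_le_of_lt (totalDegree_finset_sum _ _) ?_
        refine (Finset.sup_lt_iff (by simpa using hNpos)).mpr ?_
        intro k _
        exact hsmul_iter_lt k hNpos
      have hrest' : (∑ k ∈ Finset.range N,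
          ((-1 : ℂ) ^ (k + 1) * (c⁻¹) ^ (k + 1 + 1)) • (⇑(pderiv i₀))^[k + 1] p).totalDegree
          < ((c⁻¹ : ℂ) • p).totalDegree := by rw [hdegfirst]; exact hrest
      rw [totalDegree_add_eq_right_of_totalDegree_lt hrest', hdegfirst]
  -- injectivity of the operator q ↦ c • q + pderiv i₀ q
  have hinj : ∀ q q' : MvPolynomial (Fin n) ℂ,
      c • q + pderiv i₀ q = c • q' + pderiv i₀ q' → q = q' := by
    intro q q' h
    have hr : c • (q - q') + pderiv i₀ (q - q') = 0 := by
      rw [smul_sub, map_sub, sub_add_sub_comm, h, sub_self]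
    have h0 : q - q' = 0 := by
      by_contra hne
      by_cases hD0 : pderiv i₀ (q - q') = 0
      · rw [hD0, add_zero] at hr
        exact hne (by simpa [smul_eq_zero, hc] using hr)
      · have h1 : (pderiv i₀ (q - q')).totalDegree < (q - q').totalDegree :=
          totalDegree_pderiv_lt' _ _ hD0
        have h2 : pderiv i₀ (q - q') = -(c • (q - q')) := eq_neg_of_add_eq_zero_right hr
        rw [h2, totalDegree_neg, totalDegree_smul_eq c hc] at h1
        exact lt_irrefl _ h1
    exact sub_eq_zero.mp h0
  have hTq₀' : (ᾱ i₀ + 1) • q₀ + pderiv i₀ q₀ = p := by rw [← hc_def]; exact hTq₀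
  refine ⟨q₀, ⟨hdeg, ?_⟩, ?_⟩
  · intro x hx
    rw [pd_formula ᾱ i₀ q₀ x hx, hTq₀']
  · rintro q ⟨hqdeg, hfe⟩
    apply hinj
    rw [hTq₀]
    have key : c • q + pderiv i₀ q = p := by
      have hvanish : ∀ y : Fin n → ℝ,
          eval (fun i => ((y i : ℝ) : ℂ)) (c • q + pderiv i₀ q - p) = 0 := by
        intro y
        set x : Fin n → ℝ := fun i => Real.exp (y i) with hxdef
        have hx : ∀ i, 0 < x i := fun i => Real.exp_pos _
        have h1 := hfe x hx
        rw [pd_formula ᾱ i₀ q x hx] at h1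
        have hne : xpow x ᾱ ≠ 0 := Complex.exp_ne_zero _
        have h2 : pevalLog ((ᾱ i₀ + 1) • q + pderiv i₀ q) x = pevalLog p x :=
          mul_left_cancel₀ hne h1
        have hlogx : (fun i => ((Real.log (x i) : ℝ) : ℂ)) = fun i => ((y i : ℝ) : ℂ) := by
          funext i
          rw [hxdef]
          simp [Real.log_exp]
        rw [pevalLog, pevalLog, hlogx] at h2
        rw [map_sub, sub_eq_zero, hc_def]
        exact h2
      have hz := eval_real_eq_zero _ hvanish
      exact sub_eq_zero.mp hz
    exact key
end

section
/- Let A = [a_{ij}] be a d × n integer matrix with columns a₁, …, a_n ∈ ℤ^d, let β ∈ ℂ^d, let p ∈ ℂ[y₁, …, y_n], and let ᾱ ∈ ℂ^n with ᾱ₁ ≠ −1. Define f(x) = x^ᾱ p(log x) on the open positive orthant (ℝ_{>0})^n, and suppose that for every i ∈ {1, …, d} and every x ∈ (ℝ_{>0})^n one has Σ_{j=1}^n a_{ij} x_j ∂_j f(x) = β_i f(x). Let q ∈ ℂ[y₁, …, y_n] be a polynomial such that ∂₁[ x₁ · x^ᾱ · q(log x) ] = f(x) for all x ∈ (ℝ_{>0})^n,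 and set g(x) = x₁ · x^ᾱ · q(log x). Then for every i ∈ {1, …, d} and every x ∈ (ℝ_{>0})^n, Σ_{j=1}^n a_{ij} x_j ∂_j g(x) = (β_i + a_{i1}) g(x). -/
open MvPolynomial

lemma hasDerivAt_evalUpdate {n : ℕ} (r : MvPolynomial (Fin n) ℂ) (z : Fin n → ℂ) (j : Fin n)
    (s₀ : ℝ) :
    HasDerivAt (fun s : ℝ => MvPolynomial.eval (Function.update z j (s : ℂ)) r)
      (MvPolynomial.eval (Function.update z j ((s₀ : ℝ) : ℂ)) (pderiv j r)) s₀ := by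
  induction r using MvPolynomial.induction_on with
  | C a => simpa using hasDerivAt_const s₀ a
  | add p q hp hq => simpa using hp.fun_add hq
  | mul_X p i hp =>
      have hX : HasDerivAt (fun s : ℝ => Function.update z j ((s:ℝ) : ℂ) i)
          (if i = j then 1 else 0) s₀ := by
        rcases eq_or_ne i j with h | h
        · subst h
          simp only [Function.update_self, if_pos rfl]
          simpa using (hasDerivAt_id s₀).ofReal_comp
        · simp only [Function.update_of_ne h, if_neg h]
          exact hasDerivAt_const _ _
      have := hp.mul hX
      simp only [map_mul, eval_mul, pderiv_X, eval_add]
      convert this using 1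
      · rfl
      · funext s; simp
      · rcases eq_or_ne i j with h | h
        · subst h
          simp [Pi.single_apply, mul_comm]
          ring
        · simp [Pi.single_apply, h.symm, if_neg h, Function.update_of_ne h, mul_comm]

lemma poly_vanish_real {n : ℕ} (P : MvPolynomial (Fin n) ℂ)
    (h : ∀ y : Fin n → ℝ, MvPolynomial.eval (fun i => ((y i : ℝ) : ℂ)) P = 0) : P = 0 := by
  induction n with
  | zero =>
      have h0 := h (fun i => 0)
      rw [MvPolynomial.eq_C_of_isEmpty P] at h0 ⊢
      simpa using h0
  | succ n ih =>
      have key : ∀ (s : Fin n → ℝ),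
          Polynomial.map (MvPolynomial.eval fun i => ((s i : ℝ) : ℂ))
            (MvPolynomial.finSuccEquiv ℂ n P) = 0 := by
        intro s
        apply Polynomial.eq_zero_of_infinite_isRoot
        apply Set.Infinite.mono (s := Set.range (fun t : ℝ => (t : ℂ)))
        · rintro _ ⟨t, rfl⟩
          have h2 : Polynomial.eval ((t:ℝ):ℂ)
              (Polynomial.map (MvPolynomial.eval fun i => ((s i : ℝ) : ℂ))
                (MvPolynomial.finSuccEquiv ℂ n P)) = 0 := by
            rw [← MvPolynomial.eval_eq_eval_mv_eval']
            have h3 := h (Fin.cons t s)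
            convert h3 using 3
            funext i
            refine Fin.cases ?_ ?_ i <;> simp
          exact h2
        · exact Set.infinite_range_of_injective Complex.ofReal_injective
      have hco : MvPolynomial.finSuccEquiv ℂ n P = 0 := by
        apply Polynomial.ext
        intro k
        rw [Polynomial.coeff_zero]
        apply ih
        intro y
        have := key y
        have := congrArg (fun Q => Polynomial.coeff Q k) this
        simpa [Polynomial.coeff_map] using this
      have := (MvPolynomial.finSuccEquiv ℂ n).injective (by simpa using hco)
      simpa using this

lemma pderiv_totalDegree_lt {n : ℕ} (j : Fin n) (r : MvPolynomial (Fin n) ℂ)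
    (h : pderiv j r ≠ 0) : (pderiv j r).totalDegree < r.totalDegree := by
  have h0 : 0 < r.totalDegree := by
    rcases Nat.eq_zero_or_pos r.totalDegree with h0 | h0
    · exfalso
      apply h
      have hz := (MvPolynomial.totalDegree_eq_zero_iff _ r).1 h0
      have : r = MvPolynomial.C (MvPolynomial.coeff 0 r) := by
        conv_lhs => rw [r.as_sum]
        rcases Finset.eq_empty_or_nonempty r.support with he | ⟨v, hv⟩
        · have hc0 : MvPolynomial.coeff 0 r = 0 :=
            MvPolynomial.notMem_support_iff.1 (by simp [he])
          simp [he, hc0]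
        · have hv0 : ∀ w ∈ r.support, w = 0 := by
            intro w hw; ext i; exact hz w hw i
          have : r.support ⊆ {0} := fun w hw => by
            simp [hv0 w hw]
          rw [Finset.sum_subset this]
          · simp
          · intro w _ hw
            rw [MvPolynomial.notMem_support_iff.1 hw]
            simp
      rw [this, pderiv_C]
    · exact h0
  have hsum : pderiv j r = ∑ v ∈ r.support, pderiv j (monomial v (coeff v r)) := by
    conv_lhs => rw [r.as_sum]
    exact map_sum _ _ _
  rw [hsum]
  refine lt_of_le_of_lt (MvPolynomial.totalDegree_finset_sum _ _) ?_
  rw [Finset.sup_lt_iff (by simpa using h0)]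
  intro v hv
  rw [pderiv_monomial]
  rcases eq_or_ne (coeff v r * (v j : ℂ)) 0 with hc | hc
  · simp [hc, h0]
  · rw [MvPolynomial.totalDegree_monomial _ hc]
    have hvj : v j ≠ 0 := by
      intro hvj
      apply hc
      simp [hvj]
    have hle : (Finsupp.sum (v - Finsupp.single j 1) fun _ e => e) < v.sum fun _ e => e := by
      rw [Finsupp.sum_fintype _ _ (fun _ => rfl), Finsupp.sum_fintype _ _ (fun _ => rfl)]
      apply Finset.sum_lt_sum (fun i _ => by simp [Finsupp.tsub_apply, Nat.sub_le])
      refine ⟨j, Finset.mem_univ j, ?_⟩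
      simp [Finsupp.tsub_apply]
      omega
    exact lt_of_lt_of_le hle (MvPolynomial.le_totalDegree hv)

lemma hasDerivAt_slice {n : ℕ} (γ : Fin n → ℂ) (r : MvPolynomial (Fin n) ℂ)
    (x : Fin n → ℝ) (hx : ∀ j, 0 < x j) (j : Fin n) :
    HasDerivAt (fun t : ℝ => xpow (Function.update x j t) γ * pevalLog r (Function.update x j t))
      (((x j : ℂ))⁻¹ * (xpow x γ * (γ j * pevalLog r x + pevalLog (MvPolynomial.pderiv j r) x)))
      (x j) := by
  set L : Fin n → ℝ := fun i => Real.log (x i) with hL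
  set Lc : Fin n → ℂ := fun i => ((L i : ℝ) : ℂ) with hLc
  set G : ℝ → ℂ := fun s => Complex.exp (∑ i, γ i * Function.update Lc j ((s : ℝ) : ℂ) i) *
      MvPolynomial.eval (Function.update Lc j ((s : ℝ) : ℂ)) r with hG
  have hkey : ∀ (t : ℝ) (i : Fin n), ((Real.log (Function.update x j t i) : ℝ) : ℂ)
      = Function.update Lc j ((Real.log t : ℝ) : ℂ) i := by
    intro t i
    rcases eq_or_ne i j with rfl | h
    · simp
    · simp [Function.update_of_ne h, hLc, hL]
  have hfun : (fun t : ℝ => xpow (Function.update x j t) γ *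
      pevalLog r (Function.update x j t)) = G ∘ Real.log := by
    funext t
    simp only [Function.comp_apply, hG, xpow, pevalLog, hkey t]
  set s₀ : ℝ := Real.log (x j) with hs₀
  have hLcj : Function.update Lc j ((s₀ : ℝ) : ℂ) = Lc := Function.update_eq_self j Lc
  have hu : HasDerivAt (fun s : ℝ => ∑ i, γ i * Function.update Lc j ((s : ℝ) : ℂ) i) (γ j) s₀ := by
    have : HasDerivAt (fun s : ℝ => ∑ i, γ i * Function.update Lc j ((s : ℝ) : ℂ) i)
        (∑ i, if i = j then γ i else 0) s₀ := by
      apply HasDerivAt.fun_sum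
      intro i _
      rcases eq_or_ne i j with rfl | h
      · simp only [Function.update_self, if_pos rfl]
        simpa using (Complex.ofRealCLM.hasDerivAt (x := s₀)).const_mul (γ i)
      · simp only [Function.update_of_ne h, if_neg h]
        exact hasDerivAt_const _ _
    simpa using this
  have hexp : HasDerivAt
      (fun s : ℝ => Complex.exp (∑ i, γ i * Function.update Lc j ((s : ℝ) : ℂ) i))
      (γ j * Complex.exp (∑ i, γ i * Lc i)) s₀ := by
    have := hu.cexp
    rw [hLcj] at this
    simpa [mul_comm] using this
  have hev : HasDerivAt (fun s : ℝ => MvPolynomial.eval (Function.update Lc j ((s : ℝ) : ℂ)) r)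
      (MvPolynomial.eval Lc (pderiv j r)) s₀ := by
    have := hasDerivAt_evalUpdate r Lc j s₀
    rwa [hLcj] at this
  have hGd : HasDerivAt G
      (γ j * Complex.exp (∑ i, γ i * Lc i) * MvPolynomial.eval Lc r +
        Complex.exp (∑ i, γ i * Lc i) * MvPolynomial.eval Lc (pderiv j r)) s₀ := by
    have := hexp.mul hev
    rw [hLcj] at this
    exact this
  have hlog : HasDerivAt Real.log (x j)⁻¹ (x j) := Real.hasDerivAt_log (hx j).ne'
  have := hGd.scomp (x j) hlog
  rw [← hfun] at this
  convert this using 1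
  · rfl
  have hxj : ((x j : ℝ) : ℂ) ≠ 0 := by exact_mod_cast (hx j).ne'
  simp only [xpow, pevalLog, hLc, hL]
  rw [Complex.real_smul]
  push_cast
  ring

lemma pd_slice {n : ℕ} (γ : Fin n → ℂ) (r : MvPolynomial (Fin n) ℂ)
    (z : Fin n → ℝ) (hz : ∀ j, 0 < z j) (j : Fin n) :
    pd (fun x => xpow x γ * pevalLog r x) j z
      = ((z j : ℂ))⁻¹ * (xpow z γ * (γ j * pevalLog r z + pevalLog (MvPolynomial.pderiv j r) z)) :=
  (hasDerivAt_slice γ r z hz j).deriv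

lemma pderiv_comm' {n : ℕ} (i j : Fin n) (r : MvPolynomial (Fin n) ℂ) :
    pderiv i (pderiv j r) = pderiv j (pderiv i r) := by
  induction r using MvPolynomial.induction_on' with
  | add p q hp hq => simp [hp, hq]
  | monomial s a =>
      rcases eq_or_ne i j with rfl | h
      · rfl
      · simp only [pderiv_monomial]
        rw [Finsupp.tsub_apply, Finsupp.tsub_apply,
          Finsupp.single_eq_of_ne h, Finsupp.single_eq_of_ne (Ne.symm h)]
        rw [tsub_right_comm]
        congr 1
        simp only [Nat.sub_zero]
        ring

lemma eq_zero_of_pderiv_eq_smul {n : ℕ} (j : Fin n) (lam : ℂ) (hlam : lam ≠ 0)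
    (r : MvPolynomial (Fin n) ℂ) (h : pderiv j r = lam • r) : r = 0 := by
  by_contra hr0
  have hne : pderiv j r ≠ 0 := by rw [h]; exact smul_ne_zero hlam hr0
  have hlt := pderiv_totalDegree_lt j r hne
  rw [h] at hlt
  have h1 : (lam • r).totalDegree ≤ r.totalDegree := MvPolynomial.totalDegree_smul_le lam r
  have h2 : r.totalDegree ≤ (lam • r).totalDegree := by
    conv_lhs => rw [show r = lam⁻¹ • (lam • r) by rw [smul_smul, inv_mul_cancel₀ hlam, one_smul]]
    exact MvPolynomial.totalDegree_smul_le _ _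
  omega


/-- **Lemma `lemma:fixEulers`.** If `f = x^ᾱ p(log x)` satisfies the Euler
operator equations `Σⱼ a_{ij} xⱼ ∂ⱼ f = βᵢ f`, and `g = x₁ x^ᾱ q(log x)` is an
antiderivative of `f` with respect to `∂₁`, then `g` satisfies
`Σⱼ a_{ij} xⱼ ∂ⱼ g = (βᵢ + a_{i1}) g`. -/
theorem antiderivative_satisfies_shifted_euler
    (d n : ℕ) (hn : 0 < n) (A : Matrix (Fin d) (Fin n) ℤ) (β : Fin d → ℂ)
    (p q : MvPolynomial (Fin n) ℂ) (ᾱ : Fin n → ℂ) (hᾱ : ᾱ ⟨0, hn⟩ ≠ -1)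
    (f g : (Fin n → ℝ) → ℂ)
    (hf : ∀ x : Fin n → ℝ, f x = xpow x ᾱ * pevalLog p x)
    (heuler : ∀ (i : Fin d) (x : Fin n → ℝ), (∀ j, 0 < x j) →
      ∑ j, (A i j : ℂ) * (x j : ℂ) * pd f j x = β i * f x)
    (hg : ∀ x : Fin n → ℝ, g x = (x ⟨0, hn⟩ : ℂ) * xpow x ᾱ * pevalLog q x)
    (hanti : ∀ x : Fin n → ℝ, (∀ j, 0 < x j) → pd g ⟨0, hn⟩ x = f x) :
    ∀ (i : Fin d) (x : Fin n → ℝ), (∀ j, 0 < x j) →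
      ∑ j, (A i j : ℂ) * (x j : ℂ) * pd g j x = (β i + (A i ⟨0, hn⟩ : ℂ)) * g x := by
  intro i x hx
  classical
  set j0 : Fin n := ⟨0, hn⟩ with hj0
  set lam : ℂ := ᾱ j0 + 1 with hlam_def
  have hlam : lam ≠ 0 := by
    intro h
    apply hᾱ
    rw [hlam_def] at h
    linear_combination h
  set γ : Fin n → ℂ := fun j => ᾱ j + (if j = j0 then 1 else 0) with hγ
  have hfF : f = fun z => xpow z ᾱ * pevalLog p z := funext hf
  set G : (Fin n → ℝ) → ℂ := fun z => xpow z γ * pevalLog q z with hG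
  have hxne : ∀ z : Fin n → ℝ, xpow z ᾱ ≠ 0 := fun z => Complex.exp_ne_zero _
  have hxγ : ∀ z : Fin n → ℝ, (∀ k, 0 < z k) → xpow z γ = (z j0 : ℂ) * xpow z ᾱ := by
    intro z hz
    simp only [xpow, hγ]
    have hterm : ∀ k : Fin n, (ᾱ k + if k = j0 then 1 else 0) * (Real.log (z k) : ℂ)
        = ᾱ k * (Real.log (z k) : ℂ) + (if k = j0 then (Real.log (z k) : ℂ) else 0) := by
      intro k; split <;> ring
    rw [Finset.sum_congr rfl (fun k _ => hterm k), Finset.sum_add_distrib,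
      Finset.sum_ite_eq' Finset.univ j0 (fun k => ((Real.log (z k) : ℝ) : ℂ))]
    rw [if_pos (Finset.mem_univ j0), Complex.exp_add, ← Complex.ofReal_exp,
      Real.exp_log (hz j0)]
    ring
  have hgG : ∀ z : Fin n → ℝ, (∀ k, 0 < z k) → g z = G z := by
    intro z hz
    rw [hg z, hG]
    simp only
    rw [hxγ z hz]
  have hpdG : ∀ (j : Fin n) (z : Fin n → ℝ), (∀ k, 0 < z k) →
      pd G j z = ((z j : ℂ))⁻¹ * (xpow z γ * (γ j * pevalLog q z + pevalLog (pderiv j q) z)) := by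
    intro j z hz
    rw [hG]
    exact pd_slice γ q z hz j
  have hpdg : ∀ (j : Fin n) (z : Fin n → ℝ), (∀ k, 0 < z k) → pd g j z = pd G j z := by
    intro j z hz
    apply Filter.EventuallyEq.deriv_eq
    filter_upwards [eventually_gt_nhds (hz j)] with t ht
    apply hgG
    intro k
    rw [Function.update_apply]
    split
    · exact ht
    · exact hz k
  have hvan : ∀ r : MvPolynomial (Fin n) ℂ,
      (∀ z : Fin n → ℝ, (∀ k, 0 < z k) → pevalLog r z = 0) → r = 0 := by
    intro r h
    apply poly_vanish_real
    intro y
    have := h (fun k => Real.exp (y k)) (fun k => Real.exp_pos _)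
    simpa [pevalLog, Real.log_exp] using this
  -- Step B : Euler equations at the polynomial level for p
  have hp_euler : ∑ j, MvPolynomial.C (A i j : ℂ) * (MvPolynomial.C (ᾱ j) * p + pderiv j p)
      = MvPolynomial.C (β i) * p := by
    rw [← sub_eq_zero]
    apply hvan
    intro z hz
    have h1 := heuler i z hz
    rw [hfF] at h1
    have h2 : ∀ j : Fin n, pd (fun z => xpow z ᾱ * pevalLog p z) j z
        = ((z j : ℂ))⁻¹ * (xpow z ᾱ * (ᾱ j * pevalLog p z + pevalLog (pderiv j p) z)) :=
      fun j => pd_slice ᾱ p z hz j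
    simp only [h2] at h1
    have h3 : ∀ j : Fin n, (A i j : ℂ) * (z j : ℂ) *
        (((z j : ℂ))⁻¹ * (xpow z ᾱ * (ᾱ j * pevalLog p z + pevalLog (pderiv j p) z)))
        = xpow z ᾱ * ((A i j : ℂ) * (ᾱ j * pevalLog p z + pevalLog (pderiv j p) z)) := by
      intro j
      have hzj : ((z j : ℝ) : ℂ) ≠ 0 := by exact_mod_cast (hz j).ne'
      field_simp
    rw [Finset.sum_congr rfl (fun j _ => h3 j), ← Finset.mul_sum] at h1
    have h4 : ∑ j, (A i j : ℂ) * (ᾱ j * pevalLog p z + pevalLog (pderiv j p) z)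
        = β i * pevalLog p z := by
      apply mul_left_cancel₀ (hxne z)
      rw [h1]
      ring
    simp only [pevalLog, map_sub, map_sum, map_add, map_mul, MvPolynomial.eval_C] at h4 ⊢
    rw [sub_eq_zero]
    convert h4 using 1
  -- Step C : antiderivative relation at the polynomial level
  have hpq : MvPolynomial.C lam * q + pderiv j0 q = p := by
    rw [← sub_eq_zero]
    apply hvan
    intro z hz
    have h1 := hanti z hz
    rw [hpdg j0 z hz, hpdG j0 z hz] at h1
    simp only [hfF] at h1
    rw [hxγ z hz] at h1
    have hzj : ((z j0 : ℝ) : ℂ) ≠ 0 := by exact_mod_cast (hz j0).ne'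
    have hγ0 : γ j0 = lam := by simp [hγ, hlam_def]
    rw [hγ0] at h1
    have h3 : xpow z ᾱ * (lam * pevalLog q z + pevalLog (pderiv j0 q) z)
        = xpow z ᾱ * pevalLog p z := by
      rw [← h1]
      field_simp
    have h4 := mul_left_cancel₀ (hxne z) h3
    simp only [pevalLog, map_sub, map_add, map_mul, MvPolynomial.eval_C] at h4 ⊢
    rw [sub_eq_zero]
    convert h4 using 1
  -- Step D : the polynomial q satisfies the shifted first-order equation
  set c : ℂ := β i - ∑ j, (A i j : ℂ) * ᾱ j with hc
  set Dq : MvPolynomial (Fin n) ℂ := ∑ j, MvPolynomial.C (A i j : ℂ) * pderiv j q with hDq_def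
  have hDp : ∑ j, MvPolynomial.C (A i j : ℂ) * pderiv j p = MvPolynomial.C c * p := by
    have e1 : ∑ j, MvPolynomial.C (A i j : ℂ) * (MvPolynomial.C (ᾱ j) * p + pderiv j p)
        = MvPolynomial.C (∑ j, (A i j : ℂ) * ᾱ j) * p
          + ∑ j, MvPolynomial.C (A i j : ℂ) * pderiv j p := by
      rw [map_sum, Finset.sum_mul, ← Finset.sum_add_distrib]
      refine Finset.sum_congr rfl fun j _ => ?_
      rw [map_mul]
      ring
    rw [e1] at hp_euler
    rw [hc, map_sub, sub_mul]
    linear_combination hp_euler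
  have e2 : ∑ j, MvPolynomial.C (A i j : ℂ) * pderiv j p
      = MvPolynomial.C lam * Dq + pderiv j0 Dq := by
    rw [hDq_def, Finset.mul_sum, map_sum, ← Finset.sum_add_distrib]
    refine Finset.sum_congr rfl fun j _ => ?_
    rw [← hpq]
    simp only [map_add, pderiv_C_mul, pderiv_comm' j0 j]
    ring
  set rr : MvPolynomial (Fin n) ℂ := Dq - MvPolynomial.C c * q with hrr
  have hkey : MvPolynomial.C lam * rr + pderiv j0 rr = 0 := by
    have e3 := hDp
    rw [e2, ← hpq] at e3
    simp only [hrr, map_sub, pderiv_C_mul]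
    linear_combination e3
  have hpd_rr : pderiv j0 rr = (-lam) • rr := by
    rw [MvPolynomial.smul_eq_C_mul, map_neg, neg_mul]
    linear_combination hkey
  have hrr0 : rr = 0 := eq_zero_of_pderiv_eq_smul j0 (-lam) (neg_ne_zero.2 hlam) rr hpd_rr
  have hDq : Dq = MvPolynomial.C c * q := by
    rw [← sub_eq_zero]
    exact hrr0
  -- Step E : conclusion
  rw [hgG x hx]
  have hterm : ∀ j : Fin n, (A i j : ℂ) * (x j : ℂ) * pd g j x
      = xpow x γ * ((A i j : ℂ) * (γ j * pevalLog q x + pevalLog (pderiv j q) x)) := by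
    intro j
    rw [hpdg j x hx, hpdG j x hx]
    have hxj : ((x j : ℝ) : ℂ) ≠ 0 := by exact_mod_cast (hx j).ne'
    field_simp
  rw [Finset.sum_congr rfl (fun j _ => hterm j), ← Finset.mul_sum]
  have hDqe : ∑ j, (A i j : ℂ) * pevalLog (pderiv j q) x = c * pevalLog q x := by
    have h5 := congrArg (MvPolynomial.eval (fun k => ((Real.log (x k) : ℝ) : ℂ))) hDq
    simpa [pevalLog, hDq_def, map_sum] using h5
  have hγsum : ∑ j, (A i j : ℂ) * γ j = (∑ j, (A i j : ℂ) * ᾱ j) + (A i j0 : ℂ) := by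
    simp only [hγ, mul_add, mul_ite, mul_one, mul_zero]
    rw [Finset.sum_add_distrib, Finset.sum_ite_eq' Finset.univ j0 (fun j => (A i j : ℂ))]
    simp
  have hsum : ∑ j, (A i j : ℂ) * (γ j * pevalLog q x + pevalLog (pderiv j q) x)
      = (β i + (A i j0 : ℂ)) * pevalLog q x := by
    simp only [mul_add, ← mul_assoc]
    rw [Finset.sum_add_distrib, ← Finset.sum_mul, hγsum]
    rw [hDqe]
    rw [hc]
    ring
  rw [hsum, hG]
  simp only
  ring
end

section
/- Let n be a positive integer, p ∈ ℂ[y₁, …, y_n], ᾱ ∈ ℂ^n with ᾱ₁ ≠ −1, and μ ∈ ℕ^n with ᾱ₁ − μ₁ ≠ −1. Let f(x) = x^ᾱ p(log x) on (ℝ_{>0})^n and let q ∈ ℂ[y₁, …, y_n] satisfy ∂₁[ x₁ · x^ᾱ · q(log x) ] = f(x) for all x ∈ (ℝ_{>0})^n; set g(x) = x₁ · x^ᾱ · q(log x). Then there exist polynomials p̃, q̃ ∈ ℂ[y₁, …, y_n] such that, for all x ∈ (ℝ_{>0})^n: (a) ∂^μ f(x) = x^{ᾱ−μ} p̃(log x);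 (b) ∂₁[ x₁ · x^{ᾱ−μ} · q̃(log x) ] = x^{ᾱ−μ} p̃(log x); and (c) ∂^μ g(x) = x₁ · x^{ᾱ−μ} · q̃(log x). In other words, applying ∂^μ commutes with taking the antiderivative ∂₁^{-1} of functions of the form x^ᾱ p(log x). -/
/-- The iterated partial derivative `∂^μ = ∂₁^{μ₁} ⋯ ∂ₙ^{μₙ}`. -/
noncomputable def pdMulti {n : ℕ} (μ : Fin n → ℕ) (f : (Fin n → ℝ) → ℂ) :
    (Fin n → ℝ) → ℂ :=
  (List.finRange n).foldr (fun j g => (fun h => pd h j)^[μ j] g) f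


namespace CDhelp
open MvPolynomial

variable {n : ℕ}





lemma pderiv_comm' (i j : Fin n) (p : MvPolynomial (Fin n) ℂ) :
    pderiv i (pderiv j p) = pderiv j (pderiv i p) := by
  induction p using MvPolynomial.induction_on with
  | C a => simp
  | add p q hp hq => simp [hp, hq]
  | mul_X p k hp =>
    simp only [pderiv_mul, map_add, pderiv_X, hp, Pi.single_apply]
    split_ifs <;> simp <;> ring

noncomputable def Dop (a : ℂ) (j : Fin n) (p : MvPolynomial (Fin n) ℂ) : MvPolynomial (Fin n) ℂ :=
  C a * p + pderiv j p

noncomputable def DopIter (a : ℂ) (j : Fin n) : ℕ → MvPolynomial (Fin n) ℂ → MvPolynomial (Fin n) ℂ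
  | 0, p => p
  | (m+1), p => Dop (a - m) j (DopIter a j m p)

noncomputable def applyList (α : Fin n → ℂ) (μ : Fin n → ℕ) :
    List (Fin n) → MvPolynomial (Fin n) ℂ → MvPolynomial (Fin n) ℂ
  | [], p => p
  | (j :: l), p => DopIter (α j) j (μ j) (applyList α μ l p)

lemma Dop_comm (a b : ℂ) (i j : Fin n) (p : MvPolynomial (Fin n) ℂ) :
    Dop a i (Dop b j p) = Dop b j (Dop a i p) := by
  simp only [Dop, map_add, pderiv_mul, pderiv_C]
  rw [pderiv_comm' i j]
  ring

lemma Dop_DopIter (a b : ℂ) (i j : Fin n) (m : ℕ) (p : MvPolynomial (Fin n) ℂ) :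
    Dop a i (DopIter b j m p) = DopIter b j m (Dop a i p) := by
  induction m generalizing p with
  | zero => rfl
  | succ m ih => simp only [DopIter]; rw [Dop_comm, ih]

lemma Dop_applyList (a : ℂ) (i : Fin n) (α : Fin n → ℂ) (μ : Fin n → ℕ)
    (l : List (Fin n)) (p : MvPolynomial (Fin n) ℂ) :
    Dop a i (applyList α μ l p) = applyList α μ l (Dop a i p) := by
  induction l generalizing p with
  | nil => rfl
  | cons j l ih => simp only [applyList]; rw [Dop_DopIter, ih]

lemma Dop_congr {a b : ℂ} (h : a = b) (j : Fin n) (p : MvPolynomial (Fin n) ℂ) :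
    Dop a j p = Dop b j p := by rw [h]

lemma swapIter (a : ℂ) (j : Fin n) (m : ℕ) (p : MvPolynomial (Fin n) ℂ) :
    DopIter a j m (Dop (a + 1) j p) = Dop (a - m + 1) j (DopIter (a + 1) j m p) := by
  induction m generalizing p with
  | zero =>
    simp only [DopIter]
    exact Dop_congr (by push_cast; ring) j p
  | succ m ih =>
    simp only [DopIter]
    rw [ih]
    have e1 : (a - ((m+1 : ℕ) : ℂ) + 1) = a - (m : ℂ) := by push_cast; ring
    have e2 : (a + 1 - (m : ℂ)) = a - (m : ℂ) + 1 := by ring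
    rw [e1, e2]

lemma applyList_congr {α β : Fin n → ℂ} (μ : Fin n → ℕ) (l : List (Fin n))
    (h : ∀ j ∈ l, α j = β j) (p : MvPolynomial (Fin n) ℂ) :
    applyList α μ l p = applyList β μ l p := by
  induction l with
  | nil => rfl
  | cons j l ih =>
    simp only [applyList, h j List.mem_cons_self,
      ih (fun i hi => h i (List.mem_cons_of_mem j hi))]

/-- A complex mv-polynomial vanishing at all real points is zero. -/
lemma eval_real_zero (r : MvPolynomial (Fin n) ℂ)
    (h : ∀ y : Fin n → ℝ, MvPolynomial.eval (fun i => (y i : ℂ)) r = 0) : r = 0 := by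
  set A : MvPolynomial (Fin n) ℝ := ∑ d ∈ r.support, monomial d ((r.coeff d).re) with hA
  set B : MvPolynomial (Fin n) ℝ := ∑ d ∈ r.support, monomial d ((r.coeff d).im) with hB
  have key : ∀ y : Fin n → ℝ,
      ((MvPolynomial.eval y A : ℝ) : ℂ) + (MvPolynomial.eval y B : ℂ) * Complex.I
        = MvPolynomial.eval (fun i => (y i : ℂ)) r := by
    intro y
    conv_rhs => rw [MvPolynomial.as_sum r]
    rw [hA, hB]
    simp only [map_sum, MvPolynomial.eval_monomial]
    push_cast
    rw [Finset.sum_mul, ← Finset.sum_add_distrib]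
    refine Finset.sum_congr rfl (fun d _ => ?_)
    have hp2 : ((d.prod fun i e => y i ^ e : ℝ) : ℂ) = d.prod fun i e => ((y i : ℂ)) ^ e := by
      simp only [Finsupp.prod]
      push_cast
      rfl
    rw [hp2]
    conv_rhs => rw [← Complex.re_add_im (r.coeff d)]
    ring
  have hA0 : A = 0 := by
    apply MvPolynomial.funext
    intro y
    have hy := key y
    rw [h y] at hy
    have := congrArg Complex.re hy
    simpa using this
  have hB0 : B = 0 := by
    apply MvPolynomial.funext
    intro y
    have hy := key y
    rw [h y] at hy
    have := congrArg Complex.im hy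
    simpa using this
  by_contra hr
  obtain ⟨d, hd⟩ := (MvPolynomial.support_nonempty.2 hr)
  have hcA : MvPolynomial.coeff d A = (r.coeff d).re := by
    rw [hA, MvPolynomial.coeff_sum]
    simp only [MvPolynomial.coeff_monomial]
    rw [Finset.sum_ite_eq' r.support d]
    simp [hd]
  have hcB : MvPolynomial.coeff d B = (r.coeff d).im := by
    rw [hB, MvPolynomial.coeff_sum]
    simp only [MvPolynomial.coeff_monomial]
    rw [Finset.sum_ite_eq' r.support d]
    simp [hd]
  have : r.coeff d = 0 := by
    rw [hA0] at hcA; rw [hB0] at hcB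
    simp only [MvPolynomial.coeff_zero] at hcA hcB
    exact Complex.ext hcA.symm hcB.symm
  exact (MvPolynomial.mem_support_iff.1 hd) this






lemma pd_congr {f g : (Fin n → ℝ) → ℂ} (h : ∀ y, (∀ i, 0 < y i) → f y = g y)
    (j : Fin n) {x : Fin n → ℝ} (hx : ∀ i, 0 < x i) : pd f j x = pd g j x := by
  apply Filter.EventuallyEq.deriv_eq
  filter_upwards [Ioi_mem_nhds (hx j)] with t ht
  refine h _ (fun i => ?_)
  rcases eq_or_ne i j with rfl | hij
  · simpa using ht
  · simpa [Function.update_of_ne hij] using hx i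

lemma hasDerivAt_mveval (v : Fin n → ℂ) (j : Fin n) (p : MvPolynomial (Fin n) ℂ) (s : ℂ) :
    HasDerivAt (fun t : ℂ => MvPolynomial.eval (Function.update v j t) p)
      (MvPolynomial.eval (Function.update v j s) (MvPolynomial.pderiv j p)) s := by
  induction p using MvPolynomial.induction_on with
  | C a => simpa using hasDerivAt_const s a
  | add p q hp hq => simp only [map_add]; exact hp.add hq
  | mul_X p i hp =>
    rcases eq_or_ne i j with rfl | hij
    · have h := hp.mul (hasDerivAt_id s)
      simp only [id_eq] at h
      simp only [MvPolynomial.eval_mul, MvPolynomial.eval_X, pderiv_mul, map_add,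
        pderiv_X_self, map_one, mul_one, Function.update_self]
      exact h.congr_deriv (by ring)
    · have h := hp.mul_const (v i)
      have hX : MvPolynomial.pderiv j (MvPolynomial.X i : MvPolynomial (Fin n) ℂ) = 0 := by
        rw [MvPolynomial.pderiv_X, Pi.single_apply]; simp [hij]
      simp only [MvPolynomial.eval_mul, MvPolynomial.eval_X, pderiv_mul, map_add, hX,
        mul_zero, add_zero, MvPolynomial.eval_zero, Function.update_of_ne hij]
      exact h

lemma hasDerivAt_log_ofReal {t : ℝ} (ht : 0 < t) :
    HasDerivAt (fun u : ℝ => ((Real.log u : ℝ) : ℂ)) ((t : ℂ)⁻¹) t := by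
  have := (Real.hasDerivAt_log (ne_of_gt ht)).ofReal_comp
  simpa using this

lemma hasDerivAt_pevalLog (p : MvPolynomial (Fin n) ℂ) (j : Fin n) (x : Fin n → ℝ)
    (hx : 0 < x j) :
    HasDerivAt (fun t : ℝ => pevalLog p (Function.update x j t))
      (((x j : ℂ))⁻¹ * pevalLog (MvPolynomial.pderiv j p) x) (x j) := by
  set v : Fin n → ℂ := fun i => (Real.log (x i) : ℂ) with hv
  have hfun : ∀ t : ℝ, pevalLog p (Function.update x j t)
      = MvPolynomial.eval (Function.update v j ((Real.log t : ℝ) : ℂ)) p := by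
    intro t
    unfold pevalLog
    have harg : (fun i => ((Real.log (Function.update x j t i) : ℝ) : ℂ))
        = Function.update v j ((Real.log t : ℝ) : ℂ) := by
      funext i
      rcases eq_or_ne i j with rfl | hij
      · simp
      · simp [Function.update_of_ne hij, hv]
    rw [harg]
  have houter := hasDerivAt_mveval v j p ((Real.log (x j) : ℝ) : ℂ)
  have hinner := hasDerivAt_log_ofReal hx
  have hcomp := HasDerivAt.scomp (x j) houter hinner
  have hupdate : Function.update v j ((Real.log (x j) : ℝ) : ℂ) = v := by
    funext i
    rcases eq_or_ne i j with rfl | hij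
    · simp [hv]
    · simp [Function.update_of_ne hij]
  rw [hupdate] at hcomp
  have : (fun t : ℝ => pevalLog p (Function.update x j t))
      = (fun t : ℂ => MvPolynomial.eval (Function.update v j t) p) ∘
        (fun t : ℝ => ((Real.log t : ℝ) : ℂ)) := by
    funext t; exact hfun t
  rw [this]
  exact hcomp.congr_deriv rfl






lemma xpow_split (x : Fin n → ℝ) (α : Fin n → ℂ) (j : Fin n) (t : ℝ) :
    (∑ i, α i * (Real.log (Function.update x j t i) : ℂ))
      = α j * (Real.log t : ℂ) + ∑ i ∈ Finset.univ \ {j}, α i * (Real.log (x i) : ℂ) := by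
  have : (fun i => α i * ((Real.log (Function.update x j t i) : ℝ) : ℂ))
      = Function.update (fun i => α i * ((Real.log (x i) : ℝ) : ℂ)) j
          (α j * ((Real.log t : ℝ) : ℂ)) := by
    funext i
    rcases eq_or_ne i j with rfl | hij
    · simp
    · simp [Function.update_of_ne hij]
  rw [this, Finset.sum_update_of_mem (Finset.mem_univ j)]

lemma hasDerivAt_xpow (α : Fin n → ℂ) (x : Fin n → ℝ) (j : Fin n) (hx : ∀ i, 0 < x i) :
    HasDerivAt (fun t : ℝ => xpow (Function.update x j t) α)
      (xpow x α * (α j * ((x j : ℝ) : ℂ)⁻¹)) (x j) := by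
  set c : ℂ := ∑ i ∈ Finset.univ \ {j}, α i * (Real.log (x i) : ℂ) with hc
  have hfun : (fun t : ℝ => xpow (Function.update x j t) α)
      = fun t : ℝ => Complex.exp (α j * (Real.log t : ℂ) + c) := by
    funext t; unfold xpow; rw [xpow_split]
  have hval : xpow x α = Complex.exp (α j * (Real.log (x j) : ℂ) + c) := by
    unfold xpow
    rw [← xpow_split x α j (x j), Function.update_eq_self]
  have hinner : HasDerivAt (fun t : ℝ => α j * (Real.log t : ℂ) + c)
      (α j * ((x j : ℝ) : ℂ)⁻¹) (x j) :=
    ((hasDerivAt_log_ofReal (hx j)).const_mul (α j)).add_const c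
  have := hinner.cexp
  rw [hfun, hval]
  convert this using 1

lemma xpow_sub_single (x : Fin n → ℝ) (α : Fin n → ℂ) (j : Fin n) (hx : 0 < x j) :
    xpow x (fun i => α i - if i = j then 1 else 0) = ((x j : ℝ) : ℂ)⁻¹ * xpow x α := by
  unfold xpow
  have h1 : (∑ i, (α i - if i = j then 1 else 0) * (Real.log (x i) : ℂ))
      = (∑ i, α i * (Real.log (x i) : ℂ)) - (Real.log (x j) : ℂ) := by
    have : ∀ i, (α i - if i = j then 1 else 0) * (Real.log (x i) : ℂ)
        = α i * (Real.log (x i) : ℂ) - (if i = j then (Real.log (x i) : ℂ) else 0) := by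
      intro i; split_ifs <;> ring
    simp_rw [this]
    rw [Finset.sum_sub_distrib]
    congr 1
    rw [Finset.sum_ite_eq' Finset.univ j]
    simp
  rw [h1, Complex.exp_sub]
  have : Complex.exp ((Real.log (x j) : ℂ)) = ((x j : ℝ) : ℂ) := by
    rw [← Complex.ofReal_exp, Real.exp_log hx]
  rw [this]
  ring

lemma xpow_add_single (x : Fin n → ℝ) (α : Fin n → ℂ) (j : Fin n) (hx : 0 < x j) :
    xpow x (fun i => α i + if i = j then 1 else 0) = ((x j : ℝ) : ℂ) * xpow x α := by
  unfold xpow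
  have h1 : (∑ i, (α i + if i = j then 1 else 0) * (Real.log (x i) : ℂ))
      = (∑ i, α i * (Real.log (x i) : ℂ)) + (Real.log (x j) : ℂ) := by
    have : ∀ i, (α i + if i = j then 1 else 0) * (Real.log (x i) : ℂ)
        = α i * (Real.log (x i) : ℂ) + (if i = j then (Real.log (x i) : ℂ) else 0) := by
      intro i; split_ifs <;> ring
    simp_rw [this]
    rw [Finset.sum_add_distrib]
    congr 1
    rw [Finset.sum_ite_eq' Finset.univ j]
    simp
  rw [h1, Complex.exp_add]
  have : Complex.exp ((Real.log (x j) : ℂ)) = ((x j : ℝ) : ℂ) := by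
    rw [← Complex.ofReal_exp, Real.exp_log hx]
  rw [this]
  ring

lemma xpow_ne_zero (x : Fin n → ℝ) (α : Fin n → ℂ) : xpow x α ≠ 0 :=
  Complex.exp_ne_zero _


lemma pd_F (α : Fin n → ℂ) (p : MvPolynomial (Fin n) ℂ) (j : Fin n) (x : Fin n → ℝ)
    (hx : ∀ i, 0 < x i) :
    pd (fun y => xpow y α * pevalLog p y) j x
      = xpow x (fun i => α i - if i = j then 1 else 0) * pevalLog (Dop (α j) j p) x := by
  have h1 := hasDerivAt_xpow α x j hx
  have h2 := hasDerivAt_pevalLog p j x (hx j)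
  have h := h1.mul h2
  rw [Function.update_eq_self] at h
  unfold pd
  refine h.deriv.trans ?_
  rw [xpow_sub_single x α j (hx j)]
  have : pevalLog (Dop (α j) j p) x = α j * pevalLog p x + pevalLog (pderiv j p) x := by
    unfold Dop pevalLog
    simp
  rw [this]
  ring

lemma iter_lemma (μ : Fin n → ℕ) (j : Fin n) (m : ℕ) :
    ∀ (α : Fin n → ℂ) (p : MvPolynomial (Fin n) ℂ) (g : (Fin n → ℝ) → ℂ),
    (∀ x, (∀ i, 0 < x i) → g x = xpow x α * pevalLog p x) →
    ∀ x, (∀ i, 0 < x i) →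
      (fun h => pd h j)^[m] g x
        = xpow x (fun i => α i - if i = j then (m : ℂ) else 0)
            * pevalLog (DopIter (α j) j m p) x := by
  induction m with
  | zero =>
    intro α p g hg x hx
    simp only [Function.iterate_zero, id_eq, DopIter]
    rw [hg x hx]
    have hexp : (fun i => α i - if i = j then ((0 : ℕ) : ℂ) else 0) = α := by
      funext i; split_ifs <;> simp
    rw [hexp]
  | succ m ih =>
    intro α p g hg x hx
    rw [Function.iterate_succ_apply']
    have hcong : ∀ y, (∀ i, 0 < y i) →
        (fun h => pd h j)^[m] g y
          = (fun y => xpow y (fun i => α i - if i = j then (m : ℂ) else 0)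
              * pevalLog (DopIter (α j) j m p) y) y := fun y hy => ih α p g hg y hy
    rw [pd_congr hcong j hx]
    rw [pd_F _ _ j x hx]
    beta_reduce
    have hej : (α j - if j = j then (m : ℂ) else 0) = α j - m := by simp
    rw [hej]
    have hexp : (fun i => (α i - if i = j then (m : ℂ) else 0) - if i = j then 1 else 0)
        = fun i => α i - if i = j then ((m + 1 : ℕ) : ℂ) else 0 := by
      funext i; split_ifs <;> push_cast <;> ring
    rw [hexp]
    rfl

lemma main_lemma (μ : Fin n → ℕ) :
    ∀ (l : List (Fin n)), l.Nodup →
    ∀ (α : Fin n → ℂ) (p : MvPolynomial (Fin n) ℂ) (f : (Fin n → ℝ) → ℂ),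
    (∀ x, (∀ i, 0 < x i) → f x = xpow x α * pevalLog p x) →
    ∀ x, (∀ i, 0 < x i) →
      List.foldr (fun j g => (fun h => pd h j)^[μ j] g) f l x
        = xpow x (fun i => α i - if i ∈ l then (μ i : ℂ) else 0)
            * pevalLog (applyList α μ l p) x := by
  intro l
  induction l with
  | nil =>
    intro _ α p f hf x hx
    simp only [List.foldr_nil, List.not_mem_nil, if_false, applyList]
    rw [hf x hx]
    have hexp : (fun i : Fin n => α i - 0) = α := by funext i; ring
    rw [hexp]
  | cons j l ih =>
    intro hnd α p f hf x hx
    have hj : j ∉ l := (List.nodup_cons.1 hnd).1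
    have hl : l.Nodup := (List.nodup_cons.1 hnd).2
    simp only [List.foldr_cons]
    have hg := ih hl α p f hf
    have := iter_lemma μ j (μ j) (fun i => α i - if i ∈ l then (μ i : ℂ) else 0)
      (applyList α μ l p) (List.foldr (fun j g => (fun h => pd h j)^[μ j] g) f l) hg x hx
    rw [this]
    beta_reduce
    have hαj : (α j - if j ∈ l then ((μ j : ℕ) : ℂ) else 0) = α j := by simp [hj]
    rw [hαj]
    have hexp : (fun i => (α i - if i ∈ l then (μ i : ℂ) else 0)
          - if i = j then ((μ j : ℕ) : ℂ) else 0)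
        = fun i => α i - if i ∈ j :: l then (μ i : ℂ) else 0 := by
      funext i
      rcases eq_or_ne i j with rfl | hij
      · simp [hj]
      · simp [hij, List.mem_cons]
    rw [hexp]
    rfl

lemma pevalLog_inj {r s : MvPolynomial (Fin n) ℂ}
    (h : ∀ x : Fin n → ℝ, (∀ i, 0 < x i) → pevalLog r x = pevalLog s x) : r = s := by
  have : r - s = 0 := by
    apply eval_real_zero
    intro y
    have := h (fun i => Real.exp (y i)) (fun i => Real.exp_pos _)
    simp only [pevalLog, Real.log_exp] at this
    simp [this]
  exact sub_eq_zero.1 this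

end CDhelp

/-- **Lemma `lemma:commutingDerivatives`.** Applying `∂^μ` commutes with
the antiderivative `∂₁⁻¹` of functions of the form `x^ᾱ p(log x)`. -/
theorem iterated_derivative_commutes_with_antiderivative
    (n : ℕ) (hn : 0 < n) (p q : MvPolynomial (Fin n) ℂ)
    (ᾱ : Fin n → ℂ) (μ : Fin n → ℕ)
    (hᾱ : ᾱ ⟨0, hn⟩ ≠ -1) (hᾱμ : ᾱ ⟨0, hn⟩ - (μ ⟨0, hn⟩ : ℂ) ≠ -1)
    (f g : (Fin n → ℝ) → ℂ)
    (hf : ∀ x : Fin n → ℝ, f x = xpow x ᾱ * pevalLog p x)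
    (hg : ∀ x : Fin n → ℝ, g x = (x ⟨0, hn⟩ : ℂ) * xpow x ᾱ * pevalLog q x)
    (hanti : ∀ x : Fin n → ℝ, (∀ j, 0 < x j) → pd g ⟨0, hn⟩ x = f x) :
    ∃ pt qt : MvPolynomial (Fin n) ℂ,
      (∀ x : Fin n → ℝ, (∀ j, 0 < x j) →
        pdMulti μ f x = xpow x (fun i => ᾱ i - (μ i : ℂ)) * pevalLog pt x) ∧
      (∀ x : Fin n → ℝ, (∀ j, 0 < x j) →
        pd (fun y => (y ⟨0, hn⟩ : ℂ) * xpow y (fun i => ᾱ i - (μ i : ℂ)) * pevalLog qt y)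
            ⟨0, hn⟩ x
          = xpow x (fun i => ᾱ i - (μ i : ℂ)) * pevalLog pt x) ∧
      (∀ x : Fin n → ℝ, (∀ j, 0 < x j) →
        pdMulti μ g x = (x ⟨0, hn⟩ : ℂ) * xpow x (fun i => ᾱ i - (μ i : ℂ)) * pevalLog qt x) := by
  obtain ⟨k, rfl⟩ : ∃ k, n = k + 1 := ⟨n - 1, (Nat.succ_pred_eq_of_pos hn).symm⟩
  set z : Fin (k + 1) := ⟨0, hn⟩ with hzdef
  set αe : Fin (k + 1) → ℂ := fun i => ᾱ i + if i = z then 1 else 0 with hαe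
  have hgF : ∀ x, (∀ i, 0 < x i) →
      g x = xpow x αe * pevalLog q x := by
    intro x hx
    rw [hg x, hαe, CDhelp.xpow_add_single x ᾱ z (hx z)]
  have hfF : ∀ x, (∀ i, 0 < x i) → f x = xpow x ᾱ * pevalLog p x := fun x _ => hf x
  have hez : αe z = ᾱ z + 1 := by simp [hαe]
  have hpq : p = CDhelp.Dop (ᾱ z + 1) z q := by
    apply CDhelp.pevalLog_inj
    intro x hx
    have h1 := hanti x hx
    rw [CDhelp.pd_congr hgF z hx, CDhelp.pd_F αe q z x hx] at h1
    have he : (fun i => αe i - if i = z then 1 else 0) = ᾱ := by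
      funext i; simp only [hαe]; split_ifs <;> ring
    rw [he, hez, hf x] at h1
    exact (mul_left_cancel₀ (CDhelp.xpow_ne_zero x ᾱ) h1).symm
  set L : List (Fin (k + 1)) := List.finRange (k + 1) with hL
  have hLnd : L.Nodup := List.nodup_finRange _
  set pt := CDhelp.applyList ᾱ μ L p with hpt
  set qt := CDhelp.applyList αe μ L q with hqt
  have hmemL : ∀ i : Fin (k + 1), i ∈ L := fun i => List.mem_finRange i
  -- the key polynomial identity
  set rest : List (Fin (k + 1)) := List.map Fin.succ (List.finRange k) with hrest
  have hz0 : z = 0 := by ext; simp [hzdef]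
  have hcons : L = z :: rest := by rw [hz0, hL, hrest]; exact List.finRange_succ
  have hzrest : ∀ j ∈ rest, j ≠ z := by
    intro j hj
    rw [hrest] at hj
    obtain ⟨a, -, rfl⟩ := List.mem_map.1 hj
    rw [hz0]
    exact Fin.succ_ne_zero a
  have hQcongr : CDhelp.applyList αe μ rest q = CDhelp.applyList ᾱ μ rest q := by
    apply CDhelp.applyList_congr
    intro j hj
    simp [hαe, hzrest j hj]
  have hkey : pt = CDhelp.Dop (ᾱ z - (μ z : ℂ) + 1) z qt := by
    rw [hpt, hqt, hcons]
    simp only [CDhelp.applyList]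
    rw [hQcongr, hez, hpq, ← CDhelp.Dop_applyList, CDhelp.swapIter]
  refine ⟨pt, qt, ?_, ?_, ?_⟩
  · intro x hx
    have h := CDhelp.main_lemma μ L hLnd ᾱ p f hfF x hx
    have hexp : (fun i => ᾱ i - if i ∈ L then (μ i : ℂ) else 0)
        = fun i => ᾱ i - (μ i : ℂ) := by
      funext i; simp [hmemL i]
    rw [hexp] at h
    exact h
  · intro x hx
    have hFy : ∀ y, (∀ i, 0 < y i) →
        (fun y => ((y z : ℝ) : ℂ) * xpow y (fun i => ᾱ i - (μ i : ℂ)) * pevalLog qt y) y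
          = (fun y => xpow y (fun i => (ᾱ i - (μ i : ℂ)) + if i = z then 1 else 0)
              * pevalLog qt y) y := by
      intro y hy
      simp only
      rw [CDhelp.xpow_add_single y (fun i => ᾱ i - (μ i : ℂ)) z (hy z)]
    rw [CDhelp.pd_congr hFy z hx, CDhelp.pd_F _ qt z x hx]
    have he1 : (fun i => ((ᾱ i - (μ i : ℂ)) + if i = z then 1 else 0) - if i = z then 1 else 0)
        = fun i => ᾱ i - (μ i : ℂ) := by
      funext i; ring
    have he2 : ((ᾱ z - (μ z : ℂ)) + if z = z then (1:ℂ) else 0) = ᾱ z - (μ z : ℂ) + 1 := by simp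
    rw [he1]
    beta_reduce
    rw [he2, ← hkey]
  · intro x hx
    have h := CDhelp.main_lemma μ L hLnd αe q g hgF x hx
    have hexp : (fun i => αe i - if i ∈ L then (μ i : ℂ) else 0)
        = fun i => (ᾱ i - (μ i : ℂ)) + if i = z then 1 else 0 := by
      funext i; simp only [hαe, hmemL i, if_true]; ring
    rw [hexp, CDhelp.xpow_add_single x (fun i => ᾱ i - (μ i : ℂ)) z (hx z)] at h
    rw [show pdMulti μ g x = _ from h]
end

section
/- Let A be a d × n integer matrix with columns a₁, …, a_n ∈ ℤ^d, let F ⊆ {a₁, …, a_n}, and let b ∈ ℤ^d. Let ℕA be the additive submonoid of ℤ^d generated by a₁, …, a_n, let ℤF be the additive subgroup of ℤ^d generated by F, let ℕρ(A) be the additive submonoid of ℤ^{d+1} generated by ρ(0), ρ(a₁), …, ρ(a_n), and let ℤρ(F) be the additive subgroup of ℤ^{d+1} generated by ρ(F) = {ρ(0)} ∪ {ρ(f) : f ∈ F}. Then (b + ℤF) ∩ (ℕA + ℤF) = ∅ if and only if (ρ(b) + ℤρ(F)) ∩ (ℕρ(A) + ℤρ(F)) = ∅. -/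
open Pointwise

/-- The homogenization map `ρ : ℤ^d → ℤ^{d+1}`, `ρ(v) = (1, v)`. -/
def rhoZ {d : ℕ} (v : Fin d → ℤ) : Fin (d + 1) → ℤ := Fin.cons 1 v

lemma rhoZ_tail {d : ℕ} (v : Fin d → ℤ) : Fin.tail (rhoZ v) = v := Fin.tail_cons _ _

lemma cons_zero_mem_aux {d : ℕ} (F : Set (Fin d → ℤ)) {w : Fin d → ℤ}
    (hw : w ∈ AddSubgroup.closure F) :
    Fin.cons 0 w ∈ AddSubgroup.closure ({rhoZ (0 : Fin d → ℤ)} ∪ rhoZ '' F) := by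
  induction hw using AddSubgroup.closure_induction with
  | mem f hf =>
      have h : (Fin.cons 0 f : Fin (d+1) → ℤ) = rhoZ f - rhoZ 0 := by
        funext i
        refine Fin.cases ?_ ?_ i <;> simp [rhoZ]
      rw [h]
      exact sub_mem (AddSubgroup.subset_closure (Or.inr ⟨f, hf, rfl⟩))
        (AddSubgroup.subset_closure (Or.inl rfl))
  | zero =>
      have h : (Fin.cons 0 (0 : Fin d → ℤ) : Fin (d+1) → ℤ) = 0 := by
        funext i; refine Fin.cases ?_ ?_ i <;> simp
      rw [h]; exact zero_mem _
  | add x y hx hy hx' hy' =>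
      have h : (Fin.cons 0 (x + y) : Fin (d+1) → ℤ) = Fin.cons 0 x + Fin.cons 0 y := by
        funext i; refine Fin.cases ?_ ?_ i <;> simp
      rw [h]; exact add_mem hx' hy'
  | neg x hx hx' =>
      have h : (Fin.cons 0 (-x) : Fin (d+1) → ℤ) = -Fin.cons 0 x := by
        funext i; refine Fin.cases ?_ ?_ i <;> simp
      rw [h]; exact neg_mem hx'

lemma mem_G_iff {d : ℕ} (F : Set (Fin d → ℤ)) (u : Fin (d+1) → ℤ) :
    u ∈ AddSubgroup.closure ({rhoZ (0 : Fin d → ℤ)} ∪ rhoZ '' F) ↔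
      Fin.tail u ∈ AddSubgroup.closure F := by
  constructor
  · intro hu
    induction hu using AddSubgroup.closure_induction with
    | mem x hx =>
        rcases hx with h | ⟨f, hf, rfl⟩
        · rw [h, rhoZ_tail]; exact zero_mem _
        · rw [rhoZ_tail]; exact AddSubgroup.subset_closure hf
    | zero => exact zero_mem _
    | add x y hx hy hx' hy' => exact add_mem hx' hy'
    | neg x hx hx' => exact neg_mem hx'
  · intro hu
    have h : u = (u 0) • rhoZ (0 : Fin d → ℤ) + Fin.cons 0 (Fin.tail u) := by
      funext i
      refine Fin.cases ?_ ?_ i <;> simp [rhoZ, Fin.tail]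
    rw [h]
    have h0 : rhoZ (0 : Fin d → ℤ) ∈ AddSubgroup.closure ({rhoZ (0 : Fin d → ℤ)} ∪ rhoZ '' F) :=
      AddSubgroup.subset_closure (Or.inl rfl)
    exact add_mem (zsmul_mem h0 _) (cons_zero_mem_aux F hu)

lemma tail_mem_M {d n : ℕ} (a : Fin n → (Fin d → ℤ)) {u : Fin (d+1) → ℤ}
    (hu : u ∈ AddSubmonoid.closure
      ({rhoZ (0 : Fin d → ℤ)} ∪ Set.range (fun j => rhoZ (a j)))) :
    Fin.tail u ∈ AddSubmonoid.closure (Set.range a) := by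
  induction hu using AddSubmonoid.closure_induction with
  | mem x hx =>
      rcases hx with h | ⟨j, rfl⟩
      · rw [h, rhoZ_tail]; exact zero_mem _
      · rw [rhoZ_tail]; exact AddSubmonoid.subset_closure ⟨j, rfl⟩
  | zero => exact zero_mem _
  | add x y hx hy hx' hy' => exact add_mem hx' hy'

lemma lift_mem_M {d n : ℕ} (a : Fin n → (Fin d → ℤ)) {s : Fin d → ℤ}
    (hs : s ∈ AddSubmonoid.closure (Set.range a)) :
    ∃ u ∈ AddSubmonoid.closure
      ({rhoZ (0 : Fin d → ℤ)} ∪ Set.range (fun j => rhoZ (a j))),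
      Fin.tail u = s := by
  induction hs using AddSubmonoid.closure_induction with
  | mem x hx =>
      rcases hx with ⟨j, rfl⟩
      exact ⟨rhoZ (a j), AddSubmonoid.subset_closure (Or.inr ⟨j, rfl⟩), rhoZ_tail _⟩
  | zero => exact ⟨0, zero_mem _, rfl⟩
  | add x y hx hy hx' hy' =>
      obtain ⟨u1, hu1, rfl⟩ := hx'
      obtain ⟨u2, hu2, rfl⟩ := hy'
      exact ⟨u1 + u2, add_mem hu1 hu2, rfl⟩

/-- Let `A` be a `d × n` integer matrix with columns `a₁, …, a_n`,
`F ⊆ {a₁, …, a_n}` and `b ∈ ℤ^d`. Then `(b + ℤF) ∩ (ℕA + ℤF) = ∅` if and only if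
`(ρ(b) + ℤρ(F)) ∩ (ℕρ(A) + ℤρ(F)) = ∅`. -/
theorem homogenization_preserves_ranking_lattice_condition
    (d n : ℕ) (a : Fin n → (Fin d → ℤ)) (F : Set (Fin d → ℤ))
    (hF : F ⊆ Set.range a) (b : Fin d → ℤ) :
    ((fun v => b + v) '' (AddSubgroup.closure F : AddSubgroup (Fin d → ℤ))) ∩
        ((AddSubmonoid.closure (Set.range a) : AddSubmonoid (Fin d → ℤ)) +
          (AddSubgroup.closure F : AddSubgroup (Fin d → ℤ)) : Set (Fin d → ℤ)) = ∅ ↔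
      ((fun v => rhoZ b + v) ''
          (AddSubgroup.closure ({rhoZ (0 : Fin d → ℤ)} ∪ rhoZ '' F) :
            AddSubgroup (Fin (d + 1) → ℤ))) ∩
        ((AddSubmonoid.closure ({rhoZ (0 : Fin d → ℤ)} ∪ Set.range (fun j => rhoZ (a j))) :
            AddSubmonoid (Fin (d + 1) → ℤ)) +
          (AddSubgroup.closure ({rhoZ (0 : Fin d → ℤ)} ∪ rhoZ '' F) :
            AddSubgroup (Fin (d + 1) → ℤ)) : Set (Fin (d + 1) → ℤ)) = ∅ := by
  rw [← Set.not_nonempty_iff_eq_empty, ← Set.not_nonempty_iff_eq_empty]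
  refine not_congr ⟨?_, ?_⟩
  · rintro ⟨x, ⟨w, hw, hwx⟩, hx2⟩
    rw [Set.mem_add] at hx2
    obtain ⟨s, hs, w', hw', hsx⟩ := hx2
    obtain ⟨u, hu, hut⟩ := lift_mem_M a hs
    have hbw : b + w = s + w' := hwx.trans hsx.symm
    refine ⟨rhoZ b + Fin.cons (-1) w, ⟨Fin.cons (-1) w, ?_, rfl⟩, ?_⟩
    · exact (mem_G_iff F _).mpr (by rw [Fin.tail_cons]; exact hw)
    · rw [Set.mem_add]
      refine ⟨u, hu, Fin.cons (-(u 0)) w', (mem_G_iff F _).mpr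
        (by rw [Fin.tail_cons]; exact hw'), ?_⟩
      funext i
      refine Fin.cases ?_ ?_ i
      · simp [rhoZ]
      · intro j
        have := congrFun hbw j
        simp only [Pi.add_apply] at this ⊢
        simp only [Fin.cons_succ, rhoZ, Fin.cons_succ]
        have hts := congrFun hut j
        simp only [Fin.tail] at hts
        rw [hts]
        omega
  · rintro ⟨x', ⟨v, hv, hvx⟩, hx2⟩
    rw [Set.mem_add] at hx2
    obtain ⟨u, hu, v', hv', heq⟩ := hx2
    refine ⟨b + Fin.tail v, ⟨Fin.tail v, (mem_G_iff F v).mp hv, rfl⟩, ?_⟩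
    rw [Set.mem_add]
    refine ⟨Fin.tail u, tail_mem_M a hu, Fin.tail v', (mem_G_iff F v').mp hv', ?_⟩
    funext j
    have h1 := congrFun heq j.succ
    have h2 := congrFun hvx j.succ
    simp only [Pi.add_apply, rhoZ, Fin.cons_succ, Fin.tail] at h1 h2 ⊢
    omega
end

section
/- Let a, b, c ∈ ℂ with c ∉ ℤ_{≤0} (i.e., c is not zero or a negative integer). Then the Gauss hypergeometric series F(z; a, b, c) = Σ_{n=0}^∞ [ ∏_{ℓ=0}^{n−1} (a+ℓ)(b+ℓ)/(c+ℓ) ] · z^n / n! converges absolutely for every z ∈ ℂ with |z| < 1, and the function F(·; a, b, c) satisfies the Gauss hypergeometric equation z(1−z) F″(z) + (c − z(a+b+1)) F′(z) − a b F(z) = 0 for all z ∈ ℂ with |z| < 1. -/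
set_option linter.unreachableTactic false
set_option linter.unnecessarySeqFocus false
set_option linter.unusedTactic false

/-- The `n`-th coefficient of the Gauss hypergeometric series:
`[∏_{ℓ=0}^{n−1} (a+ℓ)(b+ℓ)/(c+ℓ)] / n!`. -/
noncomputable def gaussCoef (a b c : ℂ) (n : ℕ) : ℂ :=
  (∏ ℓ ∈ Finset.range n, ((a + ℓ) * (b + ℓ) / (c + ℓ))) / (n.factorial : ℂ)

noncomputable def Wseq (a b c : ℂ) (n : ℕ) : ℂ :=
  ((a + n) * (b + n)) / ((c + n) * ((n : ℂ) + 1))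

lemma nat_cast_succ_ne (n : ℕ) : ((n : ℂ) + 1) ≠ 0 := by
  have : (((n + 1 : ℕ)) : ℂ) ≠ 0 := Nat.cast_ne_zero.mpr (Nat.succ_ne_zero n)
  push_cast at this
  exact this

lemma key_id (a b c : ℂ) (hc : ∀ k : ℕ, c + (k : ℂ) ≠ 0) (n : ℕ) :
    ((n : ℂ) + 1) * (c + n) * gaussCoef a b c (n + 1)
      = (a + n) * (b + n) * gaussCoef a b c n := by
  unfold gaussCoef
  rw [Finset.prod_range_succ, Nat.factorial_succ]
  have h1 := nat_cast_succ_ne n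
  have h2 : ((n.factorial : ℂ)) ≠ 0 := Nat.cast_ne_zero.mpr n.factorial_ne_zero
  have hprod : (∏ x ∈ Finset.range n, (c + (x : ℂ))) ≠ 0 :=
    Finset.prod_ne_zero_iff.mpr (fun x _ => hc x)
  push_cast
  field_simp
  have h1' : (1 + (n:ℂ)) ≠ 0 := by rw [add_comm]; exact h1
  rw [div_eq_iff (by simp [mul_ne_zero_iff, hprod, hc n, h2, h1', h1])]
  ring

lemma step (a b c : ℂ) (hc : ∀ k : ℕ, c + (k : ℂ) ≠ 0) (n : ℕ) :
    gaussCoef a b c (n + 1) = gaussCoef a b c n * Wseq a b c n := by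
  have h1 := nat_cast_succ_ne n
  have hden : ((c + n) * ((n : ℂ) + 1)) ≠ 0 := mul_ne_zero (hc n) h1
  rw [Wseq, mul_div_assoc', eq_div_iff hden]
  linear_combination key_id a b c hc n

lemma inv_tendsto_zero (c : ℂ) :
    Filter.Tendsto (fun n : ℕ => (c + (n : ℂ))⁻¹) Filter.atTop (nhds 0) := by
  rw [tendsto_zero_iff_norm_tendsto_zero]
  simp only [norm_inv]
  apply Filter.Tendsto.inv_tendsto_atTop
  have hb : ∀ n : ℕ, (n : ℝ) - ‖c‖ ≤ ‖c + (n : ℂ)‖ := by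
    intro n
    calc (n : ℝ) - ‖c‖ = ‖(n : ℂ)‖ - ‖-c‖ := by simp
    _ ≤ ‖(n : ℂ) - (-c)‖ := norm_sub_norm_le _ _
    _ = ‖c + (n : ℂ)‖ := by rw [sub_neg_eq_add, add_comm]
  exact Filter.tendsto_atTop_mono' _ (Filter.Eventually.of_forall hb)
    (Filter.tendsto_atTop_add_const_right _ _ tendsto_natCast_atTop_atTop)

lemma tendsto_W (a b c : ℂ) (hc : ∀ k : ℕ, c + (k : ℂ) ≠ 0) :
    Filter.Tendsto (Wseq a b c) Filter.atTop (nhds 1) := by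
  have key : ∀ n : ℕ, Wseq a b c n
      = (1 + (a - 1) * ((1 : ℂ) + n)⁻¹) * (1 + (b - c) * (c + n)⁻¹) := by
    intro n
    have h1 : ((1 : ℂ) + n) ≠ 0 := by rw [add_comm]; exact nat_cast_succ_ne n
    have h2 := hc n
    have e1 : 1 + (a - 1) * ((1 : ℂ) + n)⁻¹ = (a + n) / ((1 : ℂ) + n) := by
      field_simp
      ring
    have e2 : 1 + (b - c) * ((c : ℂ) + n)⁻¹ = (b + n) / (c + n) := by
      field_simp
      ring
    rw [Wseq, e1, e2, div_mul_div_comm]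
    rw [div_eq_div_iff (by exact mul_ne_zero (hc n) (nat_cast_succ_ne n))
      (mul_ne_zero h1 h2)]
    ring
  rw [show (1 : ℂ) = (1 + (a - 1) * 0) * (1 + (b - c) * 0) by ring]
  exact Filter.Tendsto.congr (fun n => (key n).symm)
    (((tendsto_const_nhds.add ((tendsto_const_nhds).mul (inv_tendsto_zero 1))).mul
      (tendsto_const_nhds.add ((tendsto_const_nhds).mul (inv_tendsto_zero c)))))

lemma master (a b c : ℂ) (hc : ∀ k : ℕ, c + (k : ℂ) ≠ 0) {r : ℝ}
    (h0 : 0 ≤ r) (h1 : r < 1) (k : ℕ) :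
    Summable (fun n : ℕ =>
      ((n : ℝ) + 1) ^ k * ‖gaussCoef a b c n‖ * r ^ n) := by
  set f : ℕ → ℝ := fun n => ((n : ℝ) + 1) ^ k * ‖gaussCoef a b c n‖ * r ^ n with hf
  set ρ : ℝ := (1 + r) / 2 with hρ
  have hρ1 : ρ < 1 := by rw [hρ]; linarith
  have hrρ : r < ρ := by rw [hρ]; linarith
  set t : ℕ → ℝ := fun n =>
    (((n : ℝ) + 2) / ((n : ℝ) + 1)) ^ k * ‖Wseq a b c n‖ * r with ht
  have htend : Filter.Tendsto t Filter.atTop (nhds r) := by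
    have h2 : Filter.Tendsto (fun n : ℕ => ((n : ℝ) + 2) / ((n : ℝ) + 1))
        Filter.atTop (nhds 1) := by
      have heq : ∀ n : ℕ, ((n : ℝ) + 2) / ((n : ℝ) + 1) = 1 + 1 / ((n : ℝ) + 1) := by
        intro n
        have hne : ((n : ℝ) + 1) ≠ 0 := by positivity
        field_simp
        ring
      have := (tendsto_const_nhds (x := (1:ℝ))).add tendsto_one_div_add_atTop_nhds_zero_nat
      rw [add_zero] at this
      exact Filter.Tendsto.congr (fun n => (heq n).symm) this
    have h3 : Filter.Tendsto (fun n => ‖Wseq a b c n‖)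
        Filter.atTop (nhds 1) := by
      have := (continuous_norm.tendsto 1).comp (tendsto_W a b c hc)
      simpa [Function.comp_def] using this
    have := ((h2.pow k).mul h3).mul (tendsto_const_nhds (x := r))
    simpa using this
  have hev : ∀ᶠ n in Filter.atTop, t n < ρ := htend.eventually_lt_const hrρ
  apply summable_of_ratio_norm_eventually_le hρ1
  filter_upwards [hev] with n hn
  have hfn : 0 ≤ f n := by rw [hf]; positivity
  have ht0 : 0 ≤ t n := by
    rw [ht]
    have := norm_nonneg (Wseq a b c n)
    positivity
  have hfeq : f (n + 1) = f n * t n := by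
    rw [hf, ht]
    simp only [step a b c hc n, norm_mul]
    have hn1 : ((n : ℝ) + 1) ≠ 0 := by positivity
    push_cast
    rw [div_pow]
    field_simp
    ring
  have hfn1 : 0 ≤ f (n + 1) := by rw [hfeq]; exact mul_nonneg hfn ht0
  rw [Real.norm_of_nonneg hfn1, Real.norm_of_nonneg hfn, hfeq, mul_comm ρ (f n)]
  exact mul_le_mul_of_nonneg_left hn.le hfn

/-- The Gauss hypergeometric series `F(z; a, b, c)`. -/
noncomputable def gaussF (a b c : ℂ) (z : ℂ) : ℂ :=
  ∑' n : ℕ, gaussCoef a b c n * z ^ n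

noncomputable def phiterm (a b c z : ℂ) (n : ℕ) : ℂ :=
  (n : ℂ) * (c + n - 1) * gaussCoef a b c n * z ^ (n - 1)

lemma phiterm_shift (a b c : ℂ) (hc : ∀ k : ℕ, c + (k : ℂ) ≠ 0) (z : ℂ) (n : ℕ) :
    phiterm a b c z (n + 1) = (a + n) * (b + n) * gaussCoef a b c n * z ^ n := by
  have k := key_id a b c hc n
  unfold phiterm
  simp only [Nat.add_sub_cancel]
  push_cast
  linear_combination z ^ n * k

lemma hterm (a b c : ℂ) (hc : ∀ k : ℕ, c + (k : ℂ) ≠ 0) (z : ℂ) (n : ℕ) :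
    z * (1 - z) * ((n : ℂ) * ((n - 1 : ℕ) : ℂ) * gaussCoef a b c n * z ^ (n - 2))
      + (c - z * (a + b + 1)) * ((n : ℂ) * gaussCoef a b c n * z ^ (n - 1))
      - a * b * (gaussCoef a b c n * z ^ n)
      = phiterm a b c z n - phiterm a b c z (n + 1) := by
  rw [phiterm_shift a b c hc z n]
  match n with
  | 0 =>
    unfold phiterm
    push_cast
    simp only [pow_zero]
    ring_nf
  | 1 =>
    unfold phiterm
    push_cast
    simp only [pow_zero, pow_one]
    ring_nf
  | (m + 2) =>
    unfold phiterm
    simp only [show m + 2 - 1 = m + 1 from rfl, show m + 2 - 2 = m from rfl]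
    push_cast
    ring

/-- For `c ∉ ℤ_{≤0}`, the Gauss hypergeometric series converges
absolutely on the unit disc and satisfies the Gauss hypergeometric equation there. -/
theorem gauss_series_converges_and_solves_ode
    (a b c : ℂ) (hc : ∀ k : ℕ, c + (k : ℂ) ≠ 0) :
    (∀ z : ℂ, ‖z‖ < 1 →
      Summable (fun n : ℕ => ‖gaussCoef a b c n * z ^ n‖)) ∧
    (∀ z : ℂ, ‖z‖ < 1 →
      z * (1 - z) * deriv (deriv (gaussF a b c)) z
          + (c - z * (a + b + 1)) * deriv (gaussF a b c) z
          - a * b * gaussF a b c z = 0) := by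
  have part1 : ∀ z : ℂ, ‖z‖ < 1 →
      Summable (fun n : ℕ => ‖gaussCoef a b c n * z ^ n‖) := by
    intro z hz
    refine (master a b c hc (norm_nonneg z) hz 0).congr fun n => ?_
    simp [map_mul, map_pow]
  refine ⟨part1, ?_⟩
  intro z hz
  set q := gaussCoef a b c with hq
  set r : ℝ := (1 + ‖z‖) / 2 with hr
  have habs := norm_nonneg z
  have hr0 : 0 < r := by rw [hr]; linarith
  have hr1 : r < 1 := by rw [hr]; linarith
  have hzr : ‖z‖ < r := by rw [hr]; linarith
  have hrne : r ≠ 0 := ne_of_gt hr0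
  have hzball : z ∈ Metric.ball (0:ℂ) r := by
    rw [mem_ball_zero_iff]; exact hzr
  have hM0 := master a b c hc hr0.le hr1 0
  have hM1 := (master a b c hc hr0.le hr1 1).mul_left r⁻¹
  have hM2 := ((master a b c hc hr0.le hr1 2).mul_left r⁻¹).mul_left r⁻¹
  -- bounds
  have bound1 : ∀ (n : ℕ) (y : ℂ), y ∈ Metric.ball (0:ℂ) r →
      ‖(n : ℂ) * q n * y ^ (n - 1)‖
        ≤ r⁻¹ * (((n:ℝ)+1)^1 * ‖q n‖ * r ^ n) := by
    intro n y hy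
    have hyr : ‖y‖ ≤ r :=
      le_of_lt (by rwa [mem_ball_zero_iff] at hy)
    have hy0 : (0:ℝ) ≤ ‖y‖ := norm_nonneg y
    match n with
    | 0 =>
      simp only [Nat.cast_zero, zero_mul, norm_zero]
      positivity
    | (m+1) =>
      rw [norm_mul, norm_mul, norm_pow, Complex.norm_natCast]
      simp only [Nat.add_sub_cancel]
      have heq : r⁻¹ * ((((m+1:ℕ):ℝ)+1)^1 * ‖q (m+1)‖ * r ^ (m+1))
          = (((m:ℝ)+2)) * ‖q (m+1)‖ * r ^ m := by
        rw [pow_succ]; push_cast; field_simp; ring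
      rw [heq]
      push_cast
      gcongr <;> first | positivity | linarith | exact hyr
  have bound2 : ∀ (n : ℕ) (y : ℂ), y ∈ Metric.ball (0:ℂ) r →
      ‖(n : ℂ) * ((n-1:ℕ):ℂ) * q n * y ^ (n - 2)‖
        ≤ r⁻¹ * (r⁻¹ * (((n:ℝ)+1)^2 * ‖q n‖ * r ^ n)) := by
    intro n y hy
    have hyr : ‖y‖ ≤ r :=
      le_of_lt (by rwa [mem_ball_zero_iff] at hy)
    have hy0 : (0:ℝ) ≤ ‖y‖ := norm_nonneg y
    match n with
    | 0 =>
      simp only [Nat.cast_zero, zero_mul, norm_zero]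
      positivity
    | 1 =>
      simp only [Nat.cast_one, Nat.sub_self, Nat.cast_zero, mul_zero, zero_mul, norm_zero]
      positivity
    | (m+2) =>
      rw [norm_mul, norm_mul, norm_mul, norm_pow, Complex.norm_natCast,
        Complex.norm_natCast]
      simp only [Nat.add_sub_cancel, show m + 2 - 1 = m + 1 from rfl,
        show m + 2 - 2 = m from rfl]
      have heq : r⁻¹ * (r⁻¹ * ((((m+2:ℕ):ℝ)+1)^2 * ‖q (m+2)‖ * r ^ (m+2)))
          = (((m:ℝ)+3)^2) * ‖q (m+2)‖ * r ^ m := by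
        rw [pow_succ, pow_succ]; push_cast; field_simp; ring
      rw [heq]
      push_cast
      gcongr <;>
        first
          | positivity
          | exact hyr
          | nlinarith [Nat.cast_nonneg (α := ℝ) m]
  -- termwise derivatives
  have hd1 : ∀ (n : ℕ) (y : ℂ), y ∈ Metric.ball (0:ℂ) r →
      HasDerivAt (fun w => q n * w ^ n) ((n:ℂ) * q n * y ^ (n-1)) y := by
    intro n y _
    have := (hasDerivAt_pow n y).const_mul (q n)
    exact this.congr_deriv (by ring)
  have hd2 : ∀ (n : ℕ) (y : ℂ), y ∈ Metric.ball (0:ℂ) r →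
      HasDerivAt (fun w => (n:ℂ) * q n * w ^ (n-1))
        ((n:ℂ) * ((n-1:ℕ):ℂ) * q n * y ^ (n-2)) y := by
    intro n y _
    have h := (hasDerivAt_pow (n-1) y).const_mul ((n:ℂ) * q n)
    have he : n - 1 - 1 = n - 2 := by omega
    rw [he] at h
    exact h.congr_deriv (by ring)
  -- summability at 0
  have hg0 : Summable (fun n : ℕ => q n * (0:ℂ) ^ n) := by
    apply summable_of_ne_finset_zero (s := {0})
    intro n hn
    simp only [Finset.mem_singleton] at hn
    simp [zero_pow hn]
  have hg10 : Summable (fun n : ℕ => (n:ℂ) * q n * (0:ℂ) ^ (n-1)) := by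
    apply summable_of_ne_finset_zero (s := {0, 1})
    intro n hn
    simp only [Finset.mem_insert, Finset.mem_singleton] at hn
    have h1 : n - 1 ≠ 0 := by omega
    simp [zero_pow h1]
  have H1 : ∀ y ∈ Metric.ball (0:ℂ) r,
      HasDerivAt (fun w => ∑' n : ℕ, q n * w ^ n)
        (∑' n : ℕ, (n:ℂ) * q n * y ^ (n-1)) y :=
    fun y hy => hasDerivAt_tsum_of_isPreconnected hM1 Metric.isOpen_ball
      (convex_ball (0:ℂ) r).isPreconnected hd1 bound1 (Metric.mem_ball_self hr0) hg0 hy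
  have H2 : ∀ y ∈ Metric.ball (0:ℂ) r,
      HasDerivAt (fun w => ∑' n : ℕ, (n:ℂ) * q n * w ^ (n-1))
        (∑' n : ℕ, (n:ℂ) * ((n-1:ℕ):ℂ) * q n * y ^ (n-2)) y :=
    fun y hy => hasDerivAt_tsum_of_isPreconnected hM2 Metric.isOpen_ball
      (convex_ball (0:ℂ) r).isPreconnected hd2 bound2 (Metric.mem_ball_self hr0) hg10 hy
  have hFeq : gaussF a b c = fun w => ∑' n : ℕ, q n * w ^ n := rfl
  have hDF : Set.EqOn (deriv (gaussF a b c))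
      (fun y => ∑' n : ℕ, (n:ℂ) * q n * y ^ (n-1)) (Metric.ball (0:ℂ) r) := by
    intro y hy
    rw [hFeq]
    exact (H1 y hy).deriv
  have hderiv1 : deriv (gaussF a b c) z = ∑' n : ℕ, (n:ℂ) * q n * z ^ (n-1) :=
    hDF hzball
  have hderiv2 : deriv (deriv (gaussF a b c)) z
      = ∑' n : ℕ, (n:ℂ) * ((n-1:ℕ):ℂ) * q n * z ^ (n-2) := by
    have hev : deriv (gaussF a b c) =ᶠ[nhds z]
        (fun y => ∑' n : ℕ, (n:ℂ) * q n * y ^ (n-1)) :=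
      Filter.eventuallyEq_of_mem (Metric.isOpen_ball.mem_nhds hzball) hDF
    rw [hev.deriv_eq]
    exact (H2 z hzball).deriv
  -- summability of the individual series at z
  have S0 : Summable (fun n : ℕ => q n * z ^ n) := by
    apply Summable.of_norm_bounded hM0
    intro n
    rw [norm_mul, norm_pow]
    simp only [pow_zero, one_mul]
    gcongr <;> first | positivity | exact hzr.le
  have S1 : Summable (fun n : ℕ => (n:ℂ) * q n * z ^ (n-1)) :=
    Summable.of_norm_bounded hM1 (fun n => bound1 n z hzball)
  have S2 : Summable (fun n : ℕ => (n:ℂ) * ((n-1:ℕ):ℂ) * q n * z ^ (n-2)) :=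
    Summable.of_norm_bounded hM2 (fun n => bound2 n z hzball)
  have Sphi : Summable (fun n : ℕ => (a + n) * (b + n) * q n * z ^ n) := by
    apply Summable.of_norm_bounded
      ((master a b c hc hr0.le hr1 2).mul_left ((1 + ‖a‖) * (1 + ‖b‖)))
    intro n
    rw [norm_mul, norm_mul, norm_mul, norm_pow]
    have ha : ‖a + n‖ ≤ (1 + ‖a‖) * ((n:ℝ)+1) := by
      calc ‖a + n‖ ≤ ‖a‖ + ‖(n:ℂ)‖ := norm_add_le _ _
      _ = ‖a‖ + n := by rw [Complex.norm_natCast]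
      _ ≤ (1 + ‖a‖) * ((n:ℝ)+1) := by nlinarith [norm_nonneg a, Nat.cast_nonneg (α := ℝ) n]
    have hb : ‖b + n‖ ≤ (1 + ‖b‖) * ((n:ℝ)+1) := by
      calc ‖b + n‖ ≤ ‖b‖ + ‖(n:ℂ)‖ := norm_add_le _ _
      _ = ‖b‖ + n := by rw [Complex.norm_natCast]
      _ ≤ (1 + ‖b‖) * ((n:ℝ)+1) := by nlinarith [norm_nonneg b, Nat.cast_nonneg (α := ℝ) n]
    calc ‖a + n‖ * ‖b + n‖ * ‖q n‖ * ‖z‖ ^ n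
        ≤ ((1 + ‖a‖) * ((n:ℝ)+1)) * ((1 + ‖b‖) * ((n:ℝ)+1))
            * ‖q n‖ * r ^ n := by
          gcongr <;> first | positivity | exact ha | exact hb | exact hzr.le
    _ = (1 + ‖a‖) * (1 + ‖b‖)
          * (((n:ℝ)+1)^2 * ‖q n‖ * r ^ n) := by ring
  have hshiftS : Summable (fun n : ℕ => phiterm a b c z (n+1)) :=
    Sphi.congr (fun n => (phiterm_shift a b c hc z n).symm)
  have Sphi' : Summable (fun n : ℕ => phiterm a b c z n) :=
    (summable_nat_add_iff 1).mp hshiftS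
  -- final computation
  have hFz : gaussF a b c z = ∑' n : ℕ, q n * z ^ n := rfl
  rw [hderiv1, hderiv2, hFz]
  rw [← tsum_mul_left, ← tsum_mul_left, ← tsum_mul_left,
    ← Summable.tsum_add (S2.mul_left _) (S1.mul_left _),
    ← Summable.tsum_sub ((S2.mul_left _).add (S1.mul_left _)) (S0.mul_left _)]
  rw [tsum_congr (fun n => hterm a b c hc z n)]
  rw [Summable.tsum_sub Sphi' hshiftS, Summable.tsum_eq_zero_add Sphi']
  have h0 : phiterm a b c z 0 = 0 := by unfold phiterm; simp
  rw [h0]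
  ring
end

section
/- Let a, b, c ∈ ℂ with c ∉ ℤ. Then the functions G₁, G₂ : (0,1) → ℂ defined by G₁(z) = F(z; a, b, c) and G₂(z) = z^{1−c} · F(z; a+1−c, b+1−c, 2−c), where z^{1−c} = exp((1−c) log z) with the real logarithm, are linearly independent over ℂ. -/
open Filter Finset Complex Topology


noncomputable def gaussMaj (a b c : ℂ) (n : ℕ) : ℝ :=
  (∏ ℓ ∈ Finset.range n, ((‖a‖ + 1 + ℓ) * (‖b‖ + 1 + ℓ) / ‖c + ℓ‖)) / (n.factorial : ℝ)

lemma cne (c : ℂ) (hc : ∀ k : ℤ, c ≠ (k : ℂ)) (n : ℕ) : c + n ≠ 0 := by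
  intro h
  refine hc (-n) ?_
  have : c = -(n:ℂ) := by linear_combination h
  simpa using this

lemma gaussMaj_pos (a b c : ℂ) (hc : ∀ k : ℤ, c ≠ (k : ℂ)) (n : ℕ) : 0 < gaussMaj a b c n := by
  unfold gaussMaj
  apply div_pos
  · apply Finset.prod_pos
    intro ℓ _
    have h1 : (0:ℝ) < ‖c + ℓ‖ := norm_pos_iff.mpr (cne c hc ℓ)
    positivity
  · exact_mod_cast Nat.factorial_pos n

lemma gaussCoef_norm_le (a b c : ℂ) (n : ℕ) : ‖gaussCoef a b c n‖ ≤ gaussMaj a b c n := by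
  unfold gaussCoef gaussMaj
  rw [norm_div, norm_prod]
  have hfac : (0:ℝ) < (n.factorial : ℝ) := by exact_mod_cast Nat.factorial_pos n
  have h2 : ‖(n.factorial : ℂ)‖ = (n.factorial : ℝ) := by simp
  rw [h2, div_le_div_iff_of_pos_right hfac]
  apply Finset.prod_le_prod
  · intro i _; positivity
  · intro i _
    rw [norm_div, norm_mul]
    rcases eq_or_ne (c + (i:ℂ)) 0 with h | h
    · simp [h]
    · have hpos : (0:ℝ) < ‖c + (i:ℂ)‖ := norm_pos_iff.mpr h
      rw [div_le_div_iff_of_pos_right hpos]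
      have ha : ‖a + (i:ℂ)‖ ≤ ‖a‖ + 1 + i := by
        calc ‖a + (i:ℂ)‖ ≤ ‖a‖ + ‖(i:ℂ)‖ := norm_add_le _ _
          _ ≤ ‖a‖ + 1 + i := by simp
      have hb : ‖b + (i:ℂ)‖ ≤ ‖b‖ + 1 + i := by
        calc ‖b + (i:ℂ)‖ ≤ ‖b‖ + ‖(i:ℂ)‖ := norm_add_le _ _
          _ ≤ ‖b‖ + 1 + i := by simp
      exact mul_le_mul ha hb (norm_nonneg _) (by positivity)

lemma aux_t1 (x : ℝ) : Tendsto (fun n : ℕ => (x + n) / ((n:ℝ) + 1)) atTop (𝓝 1) := by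
  have h : ∀ n : ℕ, (x + n) / ((n:ℝ) + 1) = 1 + (x - 1) * (1 / ((n:ℝ) + 1)) := by
    intro n
    have : ((n:ℝ) + 1) ≠ 0 := by positivity
    field_simp
    ring
  simp_rw [h]
  have := tendsto_one_div_add_atTop_nhds_zero_nat (𝕜 := ℝ)
  have h2 := (tendsto_const_nhds (x := (1:ℝ)) (f := atTop)).add
    ((tendsto_const_nhds (x := x - 1) (f := (atTop : Filter ℕ))).mul this)
  simpa using h2

lemma aux_t3 (c : ℂ) : Tendsto (fun n : ℕ => ‖c + n‖ / ((n:ℝ) + 1)) atTop (𝓝 1) := by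
  have key : Tendsto (fun n : ℕ => ‖c + n‖ / ((n:ℝ) + 1) - 1) atTop (𝓝 0) := by
    apply squeeze_zero_norm (a := fun n : ℕ => ‖c - 1‖ * (1 / ((n:ℝ) + 1)))
    · intro n
      have hne : ((n:ℝ) + 1) ≠ 0 := by positivity
      have h1 : ‖c + n‖ / ((n:ℝ) + 1) - 1 = (‖c + n‖ - ((n:ℝ) + 1)) / ((n:ℝ) + 1) := by
        field_simp
      rw [h1, norm_div, Real.norm_eq_abs, Real.norm_eq_abs, abs_of_pos (by positivity : (0:ℝ) < (n:ℝ)+1)]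
      rw [div_le_iff₀ (by positivity)]
      have h2 : ‖c + n‖ - ((n:ℝ) + 1) = ‖c + (n:ℂ)‖ - ‖((n:ℂ) + 1)‖ := by
        congr 1
        rw [show ((n:ℂ) + 1) = ((n + 1 : ℕ) : ℂ) by push_cast; ring, Complex.norm_natCast]
        push_cast; ring
      rw [h2]
      calc |‖c + (n:ℂ)‖ - ‖((n:ℂ) + 1)‖| ≤ ‖(c + n) - ((n:ℂ) + 1)‖ := abs_norm_sub_norm_le _ _
        _ = ‖c - 1‖ := by ring_nf
        _ ≤ ‖c - 1‖ * (1 / ((n:ℝ)+1)) * ((n:ℝ)+1) := by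
            rw [mul_assoc, one_div_mul_cancel hne, mul_one]
    · have := tendsto_one_div_add_atTop_nhds_zero_nat (𝕜 := ℝ)
      simpa using (tendsto_const_nhds (x := ‖c - 1‖) (f := (atTop : Filter ℕ))).mul this
  have := key.add (tendsto_const_nhds (x := (1:ℝ)))
  simpa using this

lemma gaussMaj_succ (a b c : ℂ) (n : ℕ) :
    gaussMaj a b c (n+1) =
      gaussMaj a b c n * (((‖a‖ + 1 + n) * (‖b‖ + 1 + n) / ‖c + n‖) / ((n:ℝ) + 1)) := by
  unfold gaussMaj
  rw [Finset.prod_range_succ, Nat.factorial_succ]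
  push_cast
  field_simp

lemma gaussMaj_summable (a b c : ℂ) (hc : ∀ k : ℤ, c ≠ (k : ℂ)) {r : ℝ}
    (hr0 : 0 < r) (hr1 : r < 1) :
    Summable (fun n => gaussMaj a b c n * r ^ n) := by
  apply summable_of_ratio_test_tendsto_lt_one hr1
  · filter_upwards with n
    exact (mul_pos (gaussMaj_pos a b c hc n) (pow_pos hr0 n)).ne'
  · have heq : ∀ n : ℕ, ‖gaussMaj a b c (n+1) * r ^ (n+1)‖ / ‖gaussMaj a b c n * r ^ n‖ =
        ((‖a‖ + 1 + n) / ((n:ℝ) + 1)) * ((‖b‖ + 1 + n) / ‖c + n‖) * r := by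
      intro n
      have h1 := gaussMaj_pos a b c hc n
      have h2 := gaussMaj_pos a b c hc (n+1)
      have h3 : (0:ℝ) < r ^ n := pow_pos hr0 n
      have hcn : (0:ℝ) < ‖c + n‖ := norm_pos_iff.mpr (cne c hc n)
      have e1 : gaussMaj a b c n ≠ 0 := h1.ne'
      have e2 : r ^ n ≠ 0 := h3.ne'
      have e3 : ((n:ℝ)+1) ≠ 0 := by positivity
      have e4 : ‖c + (n:ℂ)‖ ≠ 0 := hcn.ne'
      rw [Real.norm_eq_abs, Real.norm_eq_abs, abs_of_pos (mul_pos h2 (pow_pos hr0 _)),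
        abs_of_pos (mul_pos h1 h3), gaussMaj_succ, pow_succ,
        div_eq_iff (mul_pos h1 h3).ne']
      field_simp
    simp_rw [heq]
    have := ((aux_t1 (‖a‖ + 1)).mul ((aux_t1 (‖b‖ + 1)).div (aux_t3 c) one_ne_zero)).mul
      (tendsto_const_nhds (x := r) (f := (atTop : Filter ℕ)))
    have heq2 : ∀ n : ℕ, ((‖a‖ + 1 + n) / ((n:ℝ) + 1)) * ((‖b‖ + 1 + n) / ‖c + n‖) * r =
        ((‖a‖ + 1 + n) / ((n:ℝ) + 1)) * (((‖b‖ + 1 + n) / ((n:ℝ) + 1)) / (‖c + n‖ / ((n:ℝ) + 1))) * r := by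
      intro n
      have e3 : ((n:ℝ)+1) ≠ 0 := by positivity
      have e4 : ‖c + (n:ℂ)‖ ≠ 0 := (norm_pos_iff.mpr (cne c hc n)).ne'
      congr 2
      rw [div_div_div_cancel_right₀]
      exact e3
    simp_rw [heq2]
    simpa using this

lemma gaussF_continuousOn (a b c : ℂ) (hc : ∀ k : ℤ, c ≠ (k : ℂ)) :
    ContinuousOn (gaussF a b c) (Metric.closedBall (0:ℂ) (1/2)) := by
  apply continuousOn_tsum (u := fun n => gaussMaj a b c n * (1/2) ^ n)
  · intro n
    exact (continuous_const.mul (continuous_pow n)).continuousOn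
  · exact gaussMaj_summable a b c hc (by norm_num) (by norm_num)
  · intro n z hz
    rw [Metric.mem_closedBall, dist_zero_right] at hz
    rw [norm_mul, norm_pow]
    exact mul_le_mul (gaussCoef_norm_le a b c n)
      (pow_le_pow_left₀ (norm_nonneg _) hz n) (by positivity) (gaussMaj_pos a b c hc n).le

lemma gaussF_zero (a b c : ℂ) : gaussF a b c 0 = 1 := by
  unfold gaussF
  rw [tsum_eq_single 0]
  · simp [gaussCoef]
  · intro n hn
    simp [zero_pow hn]

lemma gaussF_tendsto_one (a b c : ℂ) (hc : ∀ k : ℤ, c ≠ (k : ℂ)) {z : ℕ → ℝ}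
    (hz : Tendsto z atTop (𝓝 0)) :
    Tendsto (fun n => gaussF a b c (z n)) atTop (𝓝 1) := by
  have hmem : (0:ℂ) ∈ Metric.closedBall (0:ℂ) (1/2) := by
    simp
  have hcont : ContinuousWithinAt (gaussF a b c) (Metric.closedBall (0:ℂ) (1/2)) 0 :=
    (gaussF_continuousOn a b c hc).continuousWithinAt hmem
  have h1 : Tendsto (fun n => ((z n : ℂ))) atTop (𝓝[Metric.closedBall (0:ℂ) (1/2)] 0) := by
    rw [tendsto_nhdsWithin_iff]
    constructor
    · exact (Complex.continuous_ofReal.tendsto 0).comp hz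
    · have : ∀ᶠ n in atTop, |z n| ≤ 1/2 := by
        have := (hz.eventually (Metric.closedBall_mem_nhds (0:ℝ) (by norm_num : (0:ℝ) < 1/2)))
        filter_upwards [this] with n hn
        simpa [Real.dist_eq] using hn
      filter_upwards [this] with n hn
      rw [Metric.mem_closedBall, dist_zero_right]
      simpa using hn
  have := hcont.tendsto.comp h1
  rw [gaussF_zero] at this
  exact this

lemma expseq_mem (A : ℝ) (hA : 0 < A) (n : ℕ) :
    Real.exp (-(A * ((n:ℝ)+1))) ∈ Set.Ioo (0:ℝ) 1 := by
  constructor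
  · exact Real.exp_pos _
  · rw [Real.exp_lt_one_iff]
    have : (0:ℝ) < A * ((n:ℝ)+1) := by positivity
    linarith

lemma expseq_tendsto (A : ℝ) (hA : 0 < A) :
    Tendsto (fun n : ℕ => Real.exp (-(A * ((n:ℝ)+1)))) atTop (𝓝 0) := by
  apply Real.tendsto_exp_atBot.comp
  apply tendsto_neg_atTop_atBot.comp
  apply Tendsto.const_mul_atTop hA
  exact tendsto_atTop_add_const_right atTop 1 tendsto_natCast_atTop_atTop

lemma gauss_key (a b c s t : ℂ) (hc : ∀ k : ℤ, c ≠ (k:ℂ)) (hc2 : ∀ k : ℤ, 2 - c ≠ (k:ℂ))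
    (ht : t ≠ 0)
    (H : ∀ z ∈ Set.Ioo (0:ℝ) 1, s * gaussF a b c z +
      t * (Complex.exp ((1-c) * (Real.log z : ℂ)) * gaussF (a+1-c) (b+1-c) (2-c) z) = 0)
    {z : ℕ → ℝ} (hz : ∀ n, z n ∈ Set.Ioo (0:ℝ) 1) (hz0 : Tendsto z atTop (𝓝 0)) :
    Tendsto (fun n => Complex.exp ((1-c) * (Real.log (z n) : ℂ))) atTop (𝓝 (-s/t)) := by
  have hF1 := gaussF_tendsto_one a b c hc hz0
  have hF2 := gaussF_tendsto_one (a+1-c) (b+1-c) (2-c) hc2 hz0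
  have hne : ∀ᶠ n in atTop, gaussF (a+1-c) (b+1-c) (2-c) (z n) ≠ 0 :=
    hF2.eventually_ne one_ne_zero
  have hlim : Tendsto (fun n => (-s * gaussF a b c (z n)) /
      (t * gaussF (a+1-c) (b+1-c) (2-c) (z n))) atTop (𝓝 (-s/t)) := by
    have := (Tendsto.mul (tendsto_const_nhds (x := -s)) hF1).div
      (Tendsto.mul (tendsto_const_nhds (x := t)) hF2) (by simpa using ht)
    simp only [mul_one] at this
    exact this
  apply hlim.congr'
  filter_upwards [hne] with n hn2
  have hH := H (z n) (hz n)
  rw [div_eq_iff (mul_ne_zero ht hn2)]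
  linear_combination -hH

/-- For `c ∉ ℤ`, the two solutions
`G₁(z) = F(z; a, b, c)` and `G₂(z) = z^{1−c} F(z; a+1−c, b+1−c, 2−c)` of the Gauss
hypergeometric equation are linearly independent over ℂ on `(0,1)`. -/
theorem gauss_solutions_linearly_independent
    (a b c : ℂ) (hc : ∀ k : ℤ, c ≠ (k : ℂ))
    (G₁ G₂ : ℝ → ℂ)
    (hG₁ : ∀ z : ℝ, G₁ z = gaussF a b c z)
    (hG₂ : ∀ z : ℝ, G₂ z =
      Complex.exp ((1 - c) * (Real.log z : ℂ)) * gaussF (a + 1 - c) (b + 1 - c) (2 - c) z) :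
    ∀ s t : ℂ, (∀ z ∈ Set.Ioo (0 : ℝ) 1, s * G₁ z + t * G₂ z = 0) → s = 0 ∧ t = 0 := by
  intro s t H0
  have hc2 : ∀ k : ℤ, 2 - c ≠ (k : ℂ) := by
    intro k h
    refine hc (2 - k) ?_
    push_cast
    linear_combination -h
  have H : ∀ z ∈ Set.Ioo (0:ℝ) 1, s * gaussF a b c z +
      t * (Complex.exp ((1-c) * (Real.log z : ℂ)) * gaussF (a+1-c) (b+1-c) (2-c) z) = 0 := by
    intro z hz
    have := H0 z hz
    rwa [hG₁, hG₂] at this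
  -- the basic sequence exp(-(n+1))
  have hmem1 : ∀ n : ℕ, Real.exp (-(1 * ((n:ℝ)+1))) ∈ Set.Ioo (0:ℝ) 1 :=
    expseq_mem 1 one_pos
  have htend1 : Tendsto (fun n : ℕ => Real.exp (-(1 * ((n:ℝ)+1)))) atTop (𝓝 0) :=
    expseq_tendsto 1 one_pos
  have ht : t = 0 := by
    by_contra ht
    set w : ℂ := 1 - c with hw
    rcases lt_trichotomy w.re 0 with hu | hu | hu
    · -- |z^(1-c)| → ∞ but the limit is finite
      have hkey := gauss_key a b c s t hc hc2 ht H hmem1 htend1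
      have hnorm := hkey.norm
      have hinf : Tendsto (fun n : ℕ =>
          ‖Complex.exp ((1-c) * ((Real.log (Real.exp (-(1 * ((n:ℝ)+1))))) : ℂ))‖) atTop atTop := by
        have heq : ∀ n : ℕ, ‖Complex.exp ((1-c) * ((Real.log (Real.exp (-(1 * ((n:ℝ)+1))))) : ℂ))‖
            = Real.exp ((-w.re) * ((n:ℝ)+1)) := by
          intro n
          rw [Real.log_exp, Complex.norm_exp]
          congr 1
          simp [Complex.mul_re, ← hw]
          ring
        simp_rw [heq]
        apply Real.tendsto_exp_atTop.comp
        apply Tendsto.const_mul_atTop (by linarith : (0:ℝ) < -w.re)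
        exact tendsto_atTop_add_const_right atTop 1 tendsto_natCast_atTop_atTop
      exact not_tendsto_atTop_of_tendsto_nhds hnorm hinf
    · -- purely imaginary exponent: oscillation
      have hv : w.im ≠ 0 := by
        intro hv
        have : w = 0 := Complex.ext hu hv
        have : c = 1 := by rw [hw] at this; linear_combination -this
        exact hc 1 (by exact_mod_cast this)
      have hwvI : w = (w.im : ℂ) * Complex.I := by
        apply Complex.ext <;> simp [hu]
      have hvabs : (0:ℝ) < |w.im| := abs_pos.mpr hv
      have hA : (0:ℝ) < 2 * Real.pi / |w.im| := by positivity
      have hA' : (0:ℝ) < Real.pi / |w.im| := by positivity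
      -- first sequence: exp(w log z) = 1
      set A1 : ℝ := 2 * Real.pi / |w.im| with hA1
      set A2 : ℝ := Real.pi / |w.im| with hA2
      have hmemA : ∀ n : ℕ, Real.exp (-(A1 * ((n:ℝ)+1))) ∈ Set.Ioo (0:ℝ) 1 := expseq_mem A1 hA
      have htendA : Tendsto (fun n : ℕ => Real.exp (-(A1 * ((n:ℝ)+1)))) atTop (𝓝 0) :=
        expseq_tendsto A1 hA
      have hmemB : ∀ n : ℕ, Real.exp (-(A1 * ((n:ℝ)+1)) - A2) ∈ Set.Ioo (0:ℝ) 1 := by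
        intro n
        refine ⟨Real.exp_pos _, ?_⟩
        rw [Real.exp_lt_one_iff]
        nlinarith [mul_pos hA (by positivity : (0:ℝ) < (n:ℝ)+1)]
      have htendB : Tendsto (fun n : ℕ => Real.exp (-(A1 * ((n:ℝ)+1)) - A2)) atTop (𝓝 0) := by
        apply Real.tendsto_exp_atBot.comp
        apply tendsto_atBot_add_const_right
        apply tendsto_neg_atTop_atBot.comp
        apply Tendsto.const_mul_atTop hA
        exact tendsto_atTop_add_const_right atTop 1 tendsto_natCast_atTop_atTop
      have hvne : (w.im : ℂ) ≠ 0 := by exact_mod_cast hv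
      have hv2 : (1 - c).im ≠ 0 := hv
      have claim1 : ∀ n : ℕ, Complex.exp ((1-c) * ((Real.log (Real.exp (-(A1 * ((n:ℝ)+1))))) : ℂ)) = 1 := by
        intro n
        rw [Real.log_exp, ← hw, hwvI]
        rcases hv.lt_or_gt with hneg | hpos
        · have hreal : w.im * (-(A1 * ((n:ℝ)+1))) = 2*((n:ℝ)+1) * Real.pi := by
            rw [hA1, abs_of_neg hneg]
            field_simp [hv2]
          have harg : (w.im:ℂ) * Complex.I * ((-(A1 * ((n:ℝ)+1)) : ℝ) : ℂ) =
              (((n:ℤ)+1 : ℤ) : ℂ) * (2*(Real.pi:ℂ)*Complex.I) := by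
            have h0 : (w.im:ℂ) * Complex.I * ((-(A1 * ((n:ℝ)+1)) : ℝ) : ℂ)
                = ((w.im * (-(A1 * ((n:ℝ)+1))) : ℝ) : ℂ) * Complex.I := by push_cast; ring
            rw [h0, hreal]; push_cast; ring
          rw [harg, Complex.exp_int_mul_two_pi_mul_I]
        · have hreal : w.im * (-(A1 * ((n:ℝ)+1))) = -(2*((n:ℝ)+1) * Real.pi) := by
            rw [hA1, abs_of_pos hpos]
            field_simp [hv2]
          have harg : (w.im:ℂ) * Complex.I * ((-(A1 * ((n:ℝ)+1)) : ℝ) : ℂ) =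
              ((-((n:ℤ)+1) : ℤ) : ℂ) * (2*(Real.pi:ℂ)*Complex.I) := by
            have h0 : (w.im:ℂ) * Complex.I * ((-(A1 * ((n:ℝ)+1)) : ℝ) : ℂ)
                = ((w.im * (-(A1 * ((n:ℝ)+1))) : ℝ) : ℂ) * Complex.I := by push_cast; ring
            rw [h0, hreal]; push_cast; ring
          rw [harg, Complex.exp_int_mul_two_pi_mul_I]
      have claim2 : ∀ n : ℕ, Complex.exp ((1-c) * ((Real.log (Real.exp (-(A1 * ((n:ℝ)+1)) - A2))) : ℂ)) = -1 := by
        intro n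
        rw [Real.log_exp, ← hw, hwvI]
        rcases hv.lt_or_gt with hneg | hpos
        · have hreal : w.im * (-(A1 * ((n:ℝ)+1)) - A2) = (2*((n:ℝ)+1) + 1) * Real.pi := by
            rw [hA1, hA2, abs_of_neg hneg]
            field_simp [hv2]
            ring
          have harg : (w.im:ℂ) * Complex.I * ((-(A1 * ((n:ℝ)+1)) - A2 : ℝ) : ℂ) =
              (((n:ℤ)+1 : ℤ) : ℂ) * (2*(Real.pi:ℂ)*Complex.I) + (Real.pi:ℂ)*Complex.I := by
            have h0 : (w.im:ℂ) * Complex.I * ((-(A1 * ((n:ℝ)+1)) - A2 : ℝ) : ℂ)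
                = ((w.im * (-(A1 * ((n:ℝ)+1)) - A2) : ℝ) : ℂ) * Complex.I := by push_cast; ring
            rw [h0, hreal]; push_cast; ring
          rw [harg, Complex.exp_add, Complex.exp_int_mul_two_pi_mul_I, one_mul,
            Complex.exp_pi_mul_I]
        · have hreal : w.im * (-(A1 * ((n:ℝ)+1)) - A2) = -((2*((n:ℝ)+1) + 1) * Real.pi) := by
            rw [hA1, hA2, abs_of_pos hpos]
            field_simp [hv2]
            ring
          have harg : (w.im:ℂ) * Complex.I * ((-(A1 * ((n:ℝ)+1)) - A2 : ℝ) : ℂ) =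
              ((-((n:ℤ)+2) : ℤ) : ℂ) * (2*(Real.pi:ℂ)*Complex.I) + (Real.pi:ℂ)*Complex.I := by
            have h0 : (w.im:ℂ) * Complex.I * ((-(A1 * ((n:ℝ)+1)) - A2 : ℝ) : ℂ)
                = ((w.im * (-(A1 * ((n:ℝ)+1)) - A2) : ℝ) : ℂ) * Complex.I := by push_cast; ring
            rw [h0, hreal]; push_cast; ring
          rw [harg, Complex.exp_add, Complex.exp_int_mul_two_pi_mul_I, one_mul,
            Complex.exp_pi_mul_I]
      have hkey1 := gauss_key a b c s t hc hc2 ht H hmemA htendA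
      have hkey2 := gauss_key a b c s t hc hc2 ht H hmemB htendB
      simp_rw [claim1] at hkey1
      simp_rw [claim2] at hkey2
      have e1 : (1:ℂ) = -s/t := tendsto_nhds_unique tendsto_const_nhds hkey1
      have e2 : (-1:ℂ) = -s/t := tendsto_nhds_unique tendsto_const_nhds hkey2
      rw [← e1] at e2
      norm_num at e2
    · -- |z^(1-c)| → 0 hence s = 0, contradiction with t ≠ 0
      have hkey := gauss_key a b c s t hc hc2 ht H hmem1 htend1
      have hzero : Tendsto (fun n : ℕ =>
          Complex.exp ((1-c) * ((Real.log (Real.exp (-(1 * ((n:ℝ)+1))))) : ℂ))) atTop (𝓝 0) := by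
        rw [tendsto_zero_iff_norm_tendsto_zero]
        have heq : ∀ n : ℕ, ‖Complex.exp ((1-c) * ((Real.log (Real.exp (-(1 * ((n:ℝ)+1))))) : ℂ))‖
            = Real.exp (-(w.re * ((n:ℝ)+1))) := by
          intro n
          rw [Real.log_exp, Complex.norm_exp]
          congr 1
          simp [Complex.mul_re, ← hw]
          ring
        simp_rw [heq]
        exact expseq_tendsto w.re hu
      have hst : -s/t = 0 := tendsto_nhds_unique hkey hzero
      have hs : s = 0 := by
        field_simp at hst
        simpa using hst
      -- now get a contradiction
      have hF2 := gaussF_tendsto_one (a+1-c) (b+1-c) (2-c) hc2 htend1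
      obtain ⟨n, hn⟩ := (hF2.eventually_ne one_ne_zero).exists
      have hH := H _ (hmem1 n)
      rw [hs, zero_mul, zero_add] at hH
      exact (mul_ne_zero ht (mul_ne_zero (Complex.exp_ne_zero _) hn)) hH
  refine ⟨?_, ht⟩
  -- now t = 0; conclude s = 0
  have hF1 := gaussF_tendsto_one a b c hc htend1
  have hconst : ∀ n : ℕ, s * gaussF a b c (Real.exp (-(1 * ((n:ℝ)+1)))) = 0 := by
    intro n
    have := H _ (hmem1 n)
    rw [ht] at this
    simpa using this
  have h1 : Tendsto (fun n : ℕ => s * gaussF a b c (Real.exp (-(1 * ((n:ℝ)+1))))) atTop (𝓝 s) := by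
    simpa using (Tendsto.mul (tendsto_const_nhds (x := s)) hF1)
  have h2 : Tendsto (fun n : ℕ => s * gaussF a b c (Real.exp (-(1 * ((n:ℝ)+1))))) atTop (𝓝 0) := by
    simp_rw [hconst]
    exact tendsto_const_nhds
  exact tendsto_nhds_unique h1 h2
end
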